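/- arXiv:1705.07802 — 2 statements merged into one kernel-verified Lean document; each statement's English description precedes it below -/
import Mathlib

section
/- There exists a conciliatory function U: ω̂^ω → ω̂^ω that is simultaneously Σ⁰₂-universal and initializable. -/
/-!
Common definitions for formalizing "On the structure of the Wadge degrees of bqo-valued
Borel functions" by Kihara and Montalbán.
-/

open scoped Classical
noncomputable section

namespace WadgeStudy

/-! ### Baire space `ω^ω` -/

/-- Baire space `ω^ω`: the product of countably many copies of discrete `ω`. -/
abbrev Baire : Type := ℕ → ℕ

/-- The basic clopen set `[σ]` of all infinite sequences extending the finite string `σ`. -/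
def cylB (σ : List ℕ) : Set Baire := {X | ∀ i : Fin σ.length, X i = σ.get i}

/-- The finite initial segment `X↾n` of `X ∈ ω^ω`. -/
def initSeg (X : Baire) (n : ℕ) : List ℕ := List.ofFn fun i : Fin n => X i

/-- Concatenation `σ⌢X` of a finite string and an infinite sequence. -/
def appendStr (σ : List ℕ) (X : Baire) : Baire := fun i =>
  if h : i < σ.length then σ.get ⟨i, h⟩ else X (i - σ.length)

/-! ### The Borel hierarchy -/

/-- The Borel hierarchy: `Σ⁰₁` sets are the open sets; for `α > 1`, a set is `Σ⁰_α` if it is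
a countable union of sets each of which is `Π⁰_β` (i.e. has `Σ⁰_β` complement) for some
`β < α`. -/
inductive SigmaZero (X : Type*) [TopologicalSpace X] : Ordinal.{0} → Set X → Prop
  | of_isOpen {s : Set X} : IsOpen s → SigmaZero X 1 s
  | iUnion {α : Ordinal} (hα : 1 < α) (f : ℕ → Set X) (β : ℕ → Ordinal)
      (hβ : ∀ n, β n < α) (hf : ∀ n, SigmaZero X (β n) (f n)ᶜ) :
      SigmaZero X α (⋃ n, f n)

/-- `Π⁰_α` sets are the complements of `Σ⁰_α` sets. -/
def PiZero (X : Type*) [TopologicalSpace X] (α : Ordinal.{0}) (s : Set X) : Prop :=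
  SigmaZero X α sᶜ

/-- `Δ⁰_α = Σ⁰_α ∩ Π⁰_α`. -/
def DeltaZero (X : Type*) [TopologicalSpace X] (α : Ordinal.{0}) (s : Set X) : Prop :=
  SigmaZero X α s ∧ PiZero X α s

/-- A countable ordinal. -/
def IsCountableOrd (ξ : Ordinal.{0}) : Prop := ξ.card ≤ Cardinal.aleph0

/-- `A : X → Q` (with `Q` carrying the discrete topology) is `Δ⁰_ξ`-measurable iff its range is
countable and every fiber is `Δ⁰_ξ`. -/
def DeltaMeasurable {X : Type*} [TopologicalSpace X] {Q : Type*} (ξ : Ordinal.{0}) (A : X → Q) :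
    Prop :=
  (Set.range A).Countable ∧ ∀ q : Q, DeltaZero X ξ (A ⁻¹' {q})

/-- A function into Baire space is `Σ⁰_ξ`-measurable if the preimage of every basic clopen set
is `Σ⁰_ξ`. -/
def SigmaMeasurable {X : Type*} [TopologicalSpace X] (ξ : Ordinal.{0}) (D : X → Baire) : Prop :=
  ∀ σ : List ℕ, SigmaZero X ξ (D ⁻¹' cylB σ)

/-- A `Q`-valued function is Borel if it is `Δ⁰_ξ`-measurable for some countable ordinal `ξ`. -/
def BorelMeasurable {X : Type*} [TopologicalSpace X] {Q : Type*} (A : X → Q) : Prop :=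
  ∃ ξ : Ordinal.{0}, IsCountableOrd ξ ∧ DeltaMeasurable ξ A

/-! ### Wadge reducibility of `Q`-valued functions -/

/-- `Q`-Wadge reducibility: `A ≤_w B` iff there is a continuous `θ` from the domain of `A` to
the domain of `B` with `A X ≤_Q B (θ X)` for all `X`. -/
def WadgeLE {X Y : Type*} [TopologicalSpace X] [TopologicalSpace Y] {Q : Type*} [Preorder Q]
    (A : X → Q) (B : Y → Q) : Prop :=
  ∃ θ : X → Y, Continuous θ ∧ ∀ x, A x ≤ B (θ x)

/-- `Q`-Wadge equivalence. -/
def WadgeEquiv {X Y : Type*} [TopologicalSpace X] [TopologicalSpace Y] {Q : Type*} [Preorder Q]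
    (A : X → Q) (B : Y → Q) : Prop :=
  WadgeLE A B ∧ WadgeLE B A

/-- `A` is self-dual if there is a continuous `θ` with `A (θ X) ≰_Q A X` for all `X`. -/
def SelfDual {Q : Type*} [Preorder Q] (A : Baire → Q) : Prop :=
  ∃ θ : Baire → Baire, Continuous θ ∧ ∀ X, ¬ A (θ X) ≤ A X

/-- The function `A↾[σ] : X ↦ A (σ⌢X)`. -/
def restrictCyl {Q : Type*} (A : Baire → Q) (σ : List ℕ) : Baire → Q :=
  fun X => A (appendStr σ X)

/-- `A` is initializable if `A ≤_w A↾[σ]` for every finite string `σ`. -/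
def Initializable {Q : Type*} [Preorder Q] (A : Baire → Q) : Prop :=
  ∀ σ : List ℕ, WadgeLE A (restrictCyl A σ)

/-- `F(A) = {X : ∀ n, A↾[X↾n] ≡_w A}`. -/
def FSet {Q : Type*} [Preorder Q] (A : Baire → Q) : Set Baire :=
  {X | ∀ n : ℕ, WadgeEquiv (restrictCyl A (initSeg X n)) A}

/-- The countable join `⊕_n A_n`, defined by `(⊕_n A_n)(n⌢X) = A_n X`. -/
def oplus {Q : Type*} (A : ℕ → Baire → Q) : Baire → Q :=
  fun X => A (X 0) fun n => X (n + 1)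

/-- A Borel function `A` is σ-join-reducible if its `Q`-Wadge degree is the least upper bound
of a countable collection of `Q`-Wadge degrees (of Borel functions) each strictly below it. -/
def SigmaJoinReducible {Q : Type*} [Preorder Q] (A : Baire → Q) : Prop :=
  ∃ B : ℕ → Baire → Q,
    (∀ n, BorelMeasurable (B n)) ∧
    (∀ n, WadgeLE (B n) A ∧ ¬ WadgeLE A (B n)) ∧
    ∀ C : Baire → Q, BorelMeasurable C → (∀ n, WadgeLE (B n) C) → WadgeLE A C

/-! ### Better quasi-orders -/

/-- Removing the first entry of a strictly increasing sequence. -/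
def dropMin (X : {X : Baire // StrictMono X}) : {X : Baire // StrictMono X} :=
  ⟨fun n => X.1 (n + 1), fun _ _ h => X.2 (Nat.add_lt_add_right h 1)⟩

/-- A quasi-order `Q` is a better-quasi-order if for every continuous `f : [ω]^ω → Q` (where
`Q` is discrete and `[ω]^ω ⊆ ω^ω` is the subspace of strictly increasing sequences) there is
`X` with `f X ≤_Q f X⁻`. -/
def IsBQO (Q : Type*) [Preorder Q] : Prop :=
  ∀ f : {X : Baire // StrictMono X} → Q,
    @Continuous _ _ _ ⊥ f → ∃ X, f X ≤ f (dropMin X)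

/-! ### Terms: nested labeled trees and forests -/

/-- `L(Q)`-terms: constants `q ∈ Q`, labelings `⟨T⟩^{ω^α}` (with `⟨T⟩ = ⟨T⟩^{ω^0}`),
trees `B → ⊔_i F_i`, and countable disjoint unions `⊔_i F_i`. -/
inductive Term (Q : Type u) : Type (max u 1)
  | const : Q → Term Q
  | jump : Ordinal.{0} → Term Q → Term Q
  | node : Term Q → (ℕ → Term Q) → Term Q
  | sup : (ℕ → Term Q) → Term Q

/-- `⟨⟩`-type (base) terms: constants and labelings. -/
def IsBase {Q : Type u} : Term Q → Prop
  | Term.const _ => True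
  | Term.jump _ _ => True
  | _ => False

/-- A rank function on terms, used to define the quasi-order `⊴` by recursion. -/
def rk {Q : Type u} : Term Q → Ordinal.{0}
  | .const _ => 0
  | .jump _ T => rk T + 1
  | .node B F => max (rk B) (Ordinal.lsub fun i => rk (F i)) + 1
  | .sup F => Ordinal.lsub (fun i => rk (F i)) + 1

theorem ord_lt_add_one (a : Ordinal.{0}) : a < a + 1 := by
  rw [Ordinal.add_one_eq_succ]; exact Order.lt_succ a

theorem rk_lt_jump {Q : Type u} (α : Ordinal.{0}) (T : Term Q) : rk T < rk (.jump α T) :=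
  ord_lt_add_one (rk T)

theorem rk_base_lt_node {Q : Type u} (B : Term Q) (F : ℕ → Term Q) :
    rk B < rk (.node B F) :=
  lt_of_le_of_lt (le_max_left _ _) (ord_lt_add_one _)

theorem rk_child_lt_node {Q : Type u} (B : Term Q) (F : ℕ → Term Q) (i : ℕ) :
    rk (F i) < rk (.node B F) :=
  lt_of_lt_of_le (Ordinal.lt_lsub _ i) (le_trans (le_max_right _ _) (le_of_lt (ord_lt_add_one _)))

theorem rk_child_lt_sup {Q : Type u} (F : ℕ → Term Q) (i : ℕ) :
    rk (F i) < rk (.sup F) :=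
  lt_of_lt_of_le (Ordinal.lt_lsub _ i) (le_of_lt (ord_lt_add_one _))

/-- The quasi-order `⊴` on terms, defined by simultaneous recursion.  A constant `q` is
identified with `⟨q⟩` (so a constant compares with a labeled term by unravelling the label)
and a `⟨⟩`-type term `B` is identified with `B → (empty forest)`, the empty forest being
`⊴`-below everything.  The clauses are:
* `p ⊴ q` iff `p ≤_Q q`;
* `⟨U⟩^{ω^α} ⊴ ⟨V⟩^{ω^β}` iff `U ⊴ V` when `α = β`, iff `⟨U⟩^{ω^α} ⊴ V` when `α > β`, and
  iff `U ⊴ ⟨V⟩^{ω^β}` when `α < β`;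
* for `S = B→⊔_i S_i` and `T = C→⊔_j T_j`: `S ⊴ T` iff either (`B ⊴ C` and `S_i ⊴ T` for
  all `i`), or (`B ⋬ C` and `S ⊴ T_j` for some `j`);
* `⊔` is interpreted as countable supremum: `⊔_i S_i ⊴ ⊔_j T_j` iff every `S_i` is `⊴` some
  `T_j`. -/
def TermLE {Q : Type u} [Preorder Q] : Term Q → Term Q → Prop
  | .const p, .const q => p ≤ q
  | .const p, .jump _ V => TermLE (.const p) V
  | .const p, .node C G =>
      (TermLE (.const p) C) ∨ (¬ TermLE (.const p) C ∧ ∃ j, TermLE (.const p) (G j))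
  | .const p, .sup G => ∃ j, TermLE (.const p) (G j)
  | .jump _ U, .const q => TermLE U (.const q)
  | .jump α U, .jump β V =>
      if α = β then TermLE U V
      else if β < α then TermLE (.jump α U) V
      else TermLE U (.jump β V)
  | .jump α U, .node C G =>
      (TermLE (.jump α U) C) ∨ (¬ TermLE (.jump α U) C ∧ ∃ j, TermLE (.jump α U) (G j))
  | .jump α U, .sup G => ∃ j, TermLE (.jump α U) (G j)
  | .node B F, .const q => TermLE B (.const q) ∧ ∀ i, TermLE (F i) (.const q)
  | .node B F, .jump β V => TermLE B (.jump β V) ∧ ∀ i, TermLE (F i) (.jump β V)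
  | .node B F, .node C G =>
      (TermLE B C ∧ ∀ i, TermLE (F i) (.node C G)) ∨
      (¬ TermLE B C ∧ ∃ j, TermLE (.node B F) (G j))
  | .node B F, .sup G => ∃ j, TermLE (.node B F) (G j)
  | .sup F, .const q => ∀ i, TermLE (F i) (.const q)
  | .sup F, .jump β V => ∀ i, TermLE (F i) (.jump β V)
  | .sup F, .node C G => ∀ i, TermLE (F i) (.node C G)
  | .sup F, .sup G => ∀ i, ∃ j, TermLE (F i) (G j)
termination_by S T => (rk S, rk T)
decreasing_by
  all_goals
    first
      | exact Prod.Lex.left _ _ (rk_lt_jump _ _)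
      | exact Prod.Lex.left _ _ (rk_base_lt_node _ _)
      | exact Prod.Lex.left _ _ (rk_child_lt_node _ _ _)
      | exact Prod.Lex.left _ _ (rk_child_lt_sup _ _)
      | exact Prod.Lex.right _ (rk_lt_jump _ _)
      | exact Prod.Lex.right _ (rk_base_lt_node _ _)
      | exact Prod.Lex.right _ (rk_child_lt_node _ _ _)
      | exact Prod.Lex.right _ (rk_child_lt_sup _ _)

/-- `S ≡ T`: `S ⊴ T` and `T ⊴ S`. -/
def TermEquiv {Q : Type u} [Preorder Q] (S T : Term Q) : Prop := TermLE S T ∧ TermLE T S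

/-- `Tree^n(Q)` for finite `n`: `Tree⁰(Q) = Q` and `Tree^{n+1}(Q) = Tree(Tree^n(Q))`, where
`Tree(Q')` consists of the one point trees `⟨q'⟩` and the trees `⟨q'⟩ → ⊔_i T_i` for
`q' ∈ Q'` and trees `T_i ∈ Tree(Q')`. -/
inductive IsTreeN {Q : Type u} : ℕ → Term Q → Prop
  | const (q : Q) : IsTreeN 0 (.const q)
  | leaf {n : ℕ} {T : Term Q} : IsTreeN n T → IsTreeN (n + 1) (.jump 0 T)
  | node {n : ℕ} {T : Term Q} {F : ℕ → Term Q} :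
      IsTreeN n T → (∀ i, IsTreeN (n + 1) (F i)) → IsTreeN (n + 1) (.node (.jump 0 T) F)

/-- `⊔Tree^n(Q)`: trees in `Tree^n(Q)` and countable disjoint unions of such trees. -/
def IsForestN {Q : Type u} (n : ℕ) (T : Term Q) : Prop :=
  IsTreeN n T ∨ ∃ F : ℕ → Term Q, T = .sup F ∧ ∀ i, IsTreeN n (F i)

/-- The exponent `α` in the normal form `ξ = ω^α + β`, `β < ω^{α+1}`. -/
def olog (ξ : Ordinal.{0}) : Ordinal.{0} := Ordinal.log Ordinal.omega0 ξ

/-- The remainder `β` in the normal form `ξ = ω^α + β`, `β < ω^{α+1}`. -/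
def obeta (ξ : Ordinal.{0}) : Ordinal.{0} := ξ - Ordinal.omega0 ^ olog ξ

/-- `Tree^ξ(Q)` for an ordinal `ξ`: writing `ξ = ω^α + β` with `β < ω^{α+1}`, one has
`Tree^ξ(Q) = Tree^{ω^α}(⟨Tree^β(Q)⟩^{ω^α})` (with `Tree⁰(Q) = Q`), where `Tree^{ω^α}(Q')` is
generated from the constants `q' ∈ Q'` (which are `⟨⟩`-type) by the labelings `⟨T⟩^{ω^γ}` for
`γ < α` (also `⟨⟩`-type) and by `T → ⊔_i F_i` for `⟨⟩`-type `T` and trees `F_i`. -/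
inductive IsTreeXi {Q : Type u} : Ordinal.{0} → Term Q → Prop
  | const {ξ : Ordinal.{0}} (q : Q) (h : obeta ξ = 0) : IsTreeXi ξ (Term.const q)
  | atom {ξ : Ordinal.{0}} {S : Term Q} (h : obeta ξ ≠ 0) (hS : IsTreeXi (obeta ξ) S) :
      IsTreeXi ξ (Term.jump (olog ξ) S)
  | jump {ξ β : Ordinal.{0}} {T : Term Q} (h0 : ξ ≠ 0) (hβ : β < olog ξ) (hT : IsTreeXi ξ T) :
      IsTreeXi ξ (Term.jump β T)
  | node {ξ : Ordinal.{0}} {B : Term Q} {F : ℕ → Term Q} (h0 : ξ ≠ 0) (hB : IsTreeXi ξ B)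
      (hbase : IsBase B) (hF : ∀ i, IsTreeXi ξ (F i)) : IsTreeXi ξ (Term.node B F)

/-- `⊔Tree^ξ(Q)`: trees in `Tree^ξ(Q)` and countable disjoint unions of such trees. -/
def IsForestXi {Q : Type u} (ξ : Ordinal.{0}) (T : Term Q) : Prop :=
  IsTreeXi ξ T ∨ ∃ F : ℕ → Term Q, T = .sup F ∧ ∀ i, IsTreeXi ξ (F i)

/-- The `k`-fold labeling `⟨⟨…⟨T⟩…⟩⟩`. -/
def labelIter {Q : Type u} : ℕ → Term Q → Term Q
  | 0, T => T
  | k + 1, T => .jump 0 (labelIter k T)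

/-- `ι(T) = T[⟨q⟩^k / q]`: replace every occurrence of a constant `q` in `T` by `⟨q⟩^k`. -/
def iotaSubst {Q : Type u} (k : ℕ) : Term Q → Term Q
  | .const q => labelIter k (.const q)
  | .jump α T => .jump α (iotaSubst k T)
  | .node B F => .node (iotaSubst k B) fun i => iotaSubst k (F i)
  | .sup F => .sup fun i => iotaSubst k (F i)

/-! ### The pointclasses `Σ_T` -/

/-- `Σ⁰_ξ`-measurability of a Baire-space valued map on the subspace `D ⊆ ω^ω`. -/
def SigmaMeasurableOn (ξ : Ordinal.{0}) (D : Set Baire) (f : Baire → Baire) : Prop :=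
  ∀ σ : List ℕ, SigmaZero (↥D) ξ ((fun x : ↥D => f x.1) ⁻¹' cylB σ)

/-- The pointclass `Σ_T` of `Q`-valued functions associated to a term `T`, relativized to a
domain `D ⊆ ω^ω` (a function defined on a nonempty closed or open subset of `ω^ω` is
identified with the corresponding total function; `SigmaT T D A` expresses `A↾D ∈ Σ_T`):
* `Σ_q` consists only of the constant function `q`;
* `A ∈ Σ_{⊔_i S_i}` iff there is a partition of the domain into relatively clopen sets `C_i`
  with `A↾C_i ∈ Σ_{S_i}` for all `i`;
* `A ∈ Σ_{T→S}` (`S = ⊔_i F_i`) iff there is a relatively open set `V` with `A↾(D∖V) ∈ Σ_T`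
  and `A↾(D∩V) ∈ Σ_S`;
* `A ∈ Σ_{⟨T⟩^{ω^α}}` iff `A = B ∘ D'` for some `Σ⁰_{1+ω^α}`-measurable `D' : ω^ω → ω^ω` and
  some `B ∈ Σ_T` (for `α = 0` this is the clause for the jump `Σ_{⟨T⟩}`, with a
  `Σ⁰₂`-measurable `D'`). -/
inductive SigmaT {Q : Type u} : Term Q → Set Baire → (Baire → Q) → Prop
  | const (q : Q) (D : Set Baire) (A : Baire → Q) (h : ∀ x ∈ D, A x = q) :
      SigmaT (Term.const q) D A
  | sup (S : ℕ → Term Q) (D : Set Baire) (A : Baire → Q) (C : ℕ → Set Baire)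
      (hcl : ∀ i, IsClopen ((fun x : ↥D => x.1) ⁻¹' C i))
      (hpart : ∀ x ∈ D, ∃! i, x ∈ C i)
      (h : ∀ i, SigmaT (S i) (D ∩ C i) A) :
      SigmaT (Term.sup S) D A
  | node (B : Term Q) (F : ℕ → Term Q) (D : Set Baire) (A : Baire → Q) (V : Set Baire)
      (hV : IsOpen ((fun x : ↥D => x.1) ⁻¹' V))
      (h1 : SigmaT B (D \ V) A)
      (h2 : SigmaT (Term.sup F) (D ∩ V) A) :
      SigmaT (Term.node B F) D A
  | jump (α : Ordinal.{0}) (T : Term Q) (D : Set Baire) (A : Baire → Q)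
      (D' : Baire → Baire) (B : Baire → Q)
      (hD : SigmaMeasurableOn (1 + Ordinal.omega0 ^ α) D D')
      (hB : SigmaT T Set.univ B)
      (hA : ∀ x ∈ D, A x = B (D' x)) :
      SigmaT (Term.jump α T) D A

/-- A total function is in `Σ_T` if it is so on the whole space. -/
def MemSigmaT {Q : Type u} (T : Term Q) (A : Baire → Q) : Prop := SigmaT T Set.univ A

/-- `Ω` is `Σ_T`-complete: `Ω ∈ Σ_T` and every function in `Σ_T` is Wadge reducible to `Ω`. -/
def SigmaTComplete {Q : Type u} [Preorder Q] (T : Term Q) (Ω : Baire → Q) : Prop :=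
  MemSigmaT T Ω ∧ ∀ A : Baire → Q, MemSigmaT T A → WadgeLE A Ω

/-! ### `ω̂ = ω ∪ {pass}`, conciliatory functions -/

/-- `ω̂ = ω ∪ {pass}`; `none` plays the role of the symbol `pass`. -/
abbrev Hat : Type := Option ℕ

instance : TopologicalSpace Hat := ⊥
instance : DiscreteTopology Hat := ⟨rfl⟩
instance : TopologicalSpace (Option Hat) := ⊥
instance : DiscreteTopology (Option Hat) := ⟨rfl⟩

/-- `ω̂^ω`, with the product topology of the discrete space `ω̂`. -/
abbrev HatBaire : Type := ℕ → Hat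

/-- Basic clopen subsets of `ω̂^ω`. -/
def cylH (σ : List Hat) : Set HatBaire := {X | ∀ i : Fin σ.length, X i = σ.get i}

/-- The index of the `k`-th non-`pass` entry of `X ∈ ω̂^ω`, if it exists. -/
def nthSome (X : HatBaire) : ℕ → Option ℕ
  | 0 => if h : ∃ i, (X i).isSome then some (Nat.find h) else none
  | k + 1 =>
    match nthSome X k with
    | none => none
    | some i => if h : ∃ j, i < j ∧ (X j).isSome then some (Nat.find h) else none

theorem nthSome_isSome (X : HatBaire) : ∀ k i, nthSome X k = some i → (X i).isSome := by
  intro k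
  induction k with
  | zero =>
    intro i h
    simp only [nthSome] at h
    split at h
    · rename_i hex
      cases h
      exact Nat.find_spec hex
    · exact absurd h (by simp)
  | succ k ih =>
    intro i h
    simp only [nthSome] at h
    split at h
    · exact absurd h (by simp)
    · rename_i j hj
      split at h
      · rename_i hex
        cases h
        exact (Nat.find_spec hex).2
      · exact absurd h (by simp)

theorem nthSome_succ_none {X : HatBaire} {k : ℕ} (h : nthSome X k = none) :
    nthSome X (k + 1) = none := by
  simp only [nthSome, h]

/-- `X^p ∈ ω^{≤ω}`: the finite or infinite sequence obtained from `X ∈ ω̂^ω` by deleting all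
occurrences of `pass`. -/
def strip (X : HatBaire) : Stream'.Seq ℕ :=
  ⟨fun k => (nthSome X k).bind fun i => X i, by
    intro n h
    have hn : nthSome X n = none := by
      cases hh : nthSome X n with
      | none => rfl
      | some i =>
        exfalso
        have h1 := nthSome_isSome X n i hh
        replace h : (nthSome X n).bind (fun i => X i) = none := h
        rw [hh, Option.bind_some] at h
        rw [h] at h1
        simp at h1
    show (nthSome X (n + 1)).bind _ = none
    rw [nthSome_succ_none hn, Option.bind_none]⟩

/-- The natural inclusion `ω^ω ⊆ ω^{≤ω}`. -/
def ofBaire (X : Baire) : Stream'.Seq ℕ :=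
  ⟨fun n => some (X n), by intro n h; simp at h⟩

/-- The natural inclusion `ω^{<ω} ⊆ ω^{≤ω}`. -/
def ofList (σ : List ℕ) : Stream'.Seq ℕ := Stream'.Seq.ofList σ

/-- The initial segment (prefix) relation on `ω^{≤ω}`. -/
def SeqPrefix (σ τ : Stream'.Seq ℕ) : Prop :=
  ∀ n a, σ.get? n = some a → τ.get? n = some a

/-- A `Q`-valued function on `ω̂^ω` is conciliatory if its value depends only on the
pass-deleted input: `X^p = Y^p → A(X) = A(Y)`. -/
def ConciliatoryQ {Q : Type*} (A : HatBaire → Q) : Prop :=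
  ∀ X Y, strip X = strip Y → A X = A Y

/-- `Ψ : ω̂^ω → ω̂^ω` is conciliatory if `X^p = Y^p` implies `Ψ(X)^p = Ψ(Y)^p`. -/
def ConciliatoryF (Ψ : HatBaire → HatBaire) : Prop :=
  ∀ X Y, strip X = strip Y → strip (Ψ X) = strip (Ψ Y)

/-- `Ψ ≡_p Φ`: `Ψ(X)^p = Φ(X)^p` for all `X`. -/
def PEquiv (Ψ Φ : HatBaire → HatBaire) : Prop := ∀ X, strip (Ψ X) = strip (Φ X)

/-- `Σ⁰_ξ`-measurability for self-maps of `ω̂^ω`. -/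
def SigmaMeasurableH (ξ : Ordinal.{0}) (Ψ : HatBaire → HatBaire) : Prop :=
  ∀ σ : List Hat, SigmaZero HatBaire ξ (Ψ ⁻¹' cylH σ)

/-- A conciliatory `U` is `Σ⁰_ξ`-universal if it is `Σ⁰_ξ`-measurable and every
`Σ⁰_ξ`-measurable conciliatory `G` satisfies `G ≡_p U ∘ θ` for some continuous `θ`. -/
def SigmaUniversal (ξ : Ordinal.{0}) (U : HatBaire → HatBaire) : Prop :=
  SigmaMeasurableH ξ U ∧
    ∀ G : HatBaire → HatBaire, ConciliatoryF G → SigmaMeasurableH ξ G →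
      ∃ θ : HatBaire → HatBaire, Continuous θ ∧ PEquiv G (U ∘ θ)

/-- `Ψ` is initializable if for every `τ ∈ ω̂^{<ω}` there is a continuous `θ_τ : ω̂^ω → [τ]`
with `Ψ ≡_p Ψ ∘ θ_τ`. -/
def InitializableH (Ψ : HatBaire → HatBaire) : Prop :=
  ∀ τ : List Hat, ∃ θ : HatBaire → HatBaire,
    Continuous θ ∧ (∀ X, θ X ∈ cylH τ) ∧ PEquiv Ψ (Ψ ∘ θ)

/-! ### The mind-change coding -/

/-- `ω̂^{≤ω}`: finite or infinite sequences over `ω̂` (the value `none` of the outer `Option`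
means "beyond the length of the sequence"). -/
abbrev HatSeq : Type := {Y : ℕ → Option Hat // ∀ n, Y n = none → Y (n + 1) = none}

/-- The pass-deleted sequence `Y^p ∈ ω^{≤ω}` of `Y ∈ ω̂^{≤ω}`. -/
def stripHS (Y : HatSeq) : Stream'.Seq ℕ := strip fun n => (Y.1 n).join

/-- The mind-change coding `Y → Z` for `Y ∈ ω̂^{≤ω}` of length `ℓ` and `Z ∈ ω̂^ω`:
`(Y→Z)(n) = 2·Y(n)` if `n < ℓ` and `Y(n) ≠ pass`; `pass` if `n < ℓ` and `Y(n) = pass`;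
`2·Z(0)+1` if `n = ℓ`; and `Z(n−ℓ)` if `n > ℓ`.  When `Y` is infinite or `Z^p` is empty,
`Y→Z` is `Y` with each non-pass entry doubled (padded with passes). -/
def arrowSeq (Y : HatSeq) (Z : HatBaire) : HatBaire := fun n =>
  match Y.1 n with
  | some (some k) => some (2 * k)
  | some none => none
  | none =>
    if ∀ m, Z m = none then none
    else if n = sInf {m | Y.1 m = none} then (Z 0).map fun z => 2 * z + 1
    else Z (n - sInf {m | Y.1 m = none})

/-- The canonical `π₀`: the part of `X` before the first mind change, with all entries halved
(and passes from the first mind change on). -/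
def pi0 (X : HatBaire) : HatBaire := fun n =>
  if ∃ m ≤ n, ∃ k, X m = some (2 * k + 1) then none
  else (X n).map fun k => k / 2

/-- The canonical `π₁`: the decoded part of `X` from the first mind change on (and all passes
if no mind change ever occurs). -/
def pi1 (X : HatBaire) : HatBaire := fun n =>
  if ∃ m, ∃ k, X m = some (2 * k + 1) then
    if n = 0 then (X (sInf {m | ∃ k, X m = some (2 * k + 1)})).map fun k => k / 2
    else X (sInf {m | ∃ k, X m = some (2 * k + 1)} + n)
  else none

/-- The mind-change operation on functions:
`(A→B)(X) = A(π₀ X)` if `π₁(X)^p` is empty, and `B(π₁ X)` otherwise. -/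
def mcArrow {Q : Type*} (A B : HatBaire → Q) : HatBaire → Q := fun X =>
  if ∀ n, pi1 X n = none then A (pi0 X) else B (pi1 X)

/-- The `Σ_T`-complete functions `Ω_T`, relative to a fixed `Σ⁰₂`-universal initializable
conciliatory function `𝒰`:
* `Ω_{⟨q⟩}` is the constant function with value `q` (equivalently `Ω_q ∘ 𝒰`);
* `Ω_{⟨S⟩} = Ω_S ∘ 𝒰`;
* `Ω_{⟨S⟩→F} = Ω_{⟨S⟩} → Ω_F`: the value is `Ω_{⟨S⟩}(π₀ X)` if no mind change occurs in `X`,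
  and `Ω_F(π₁ X)` otherwise (where `Ω_F(n⌢X') = Ω_{F_n}(X')`);
* `Ω_{⊔_n T_n}(n⌢X) = Ω_{T_n}(X)`. -/
def Omega {Q : Type u} (U : HatBaire → HatBaire) : Term Q → HatBaire → Q
  | .const q => fun _ => q
  | .jump _ T => fun X => Omega U T (U X)
  | .node B F => fun X =>
      if ∀ n, pi1 X n = none then Omega U B (pi0 X)
      else Omega U (F ((pi1 X 0).getD 0)) fun n => pi1 X (n + 1)
  | .sup F => fun X => Omega U (F ((X 0).getD 0)) fun n => X (n + 1)

/-- `Ω_T` as a function on `ω × ω̂^ω`: for a `⊔`-type term `⊔_n T_n` this is the function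
`(n, X) ↦ Ω_{T_n}(X)`; a tree is treated as a forest with a single (repeated) component,
i.e. `Ω_T` is composed with the (Wadge-irrelevant) projection. -/
def OmegaC {Q : Type u} (U : HatBaire → HatBaire) (T : Term Q) : ℕ × HatBaire → Q :=
  match T with
  | .sup F => fun p => Omega U (F p.1) p.2
  | t => fun p => Omega U t p.2

/-! ### Auxiliary development for Statement 10 -/

section Statement10

/-- Number of non-`pass` entries among the first `i` entries of `X`. -/
def cnt (X : HatBaire) (i : ℕ) : ℕ := Nat.count (fun j => (X j).isSome) i

theorem cnt_zero (X : HatBaire) : cnt X 0 = 0 := rfl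

theorem cnt_mono (X : HatBaire) : Monotone (cnt X) := Nat.count_monotone _

theorem cnt_succ (X : HatBaire) (i : ℕ) :
    cnt X (i + 1) = cnt X i + if (X i).isSome then 1 else 0 :=
  Nat.count_succ (p := fun j => (X j).isSome) i

theorem cnt_succ_of_isSome {X : HatBaire} {i : ℕ} (h : (X i).isSome) :
    cnt X (i + 1) = cnt X i + 1 := by rw [cnt_succ, if_pos h]

theorem cnt_succ_of_not {X : HatBaire} {i : ℕ} (h : ¬ (X i).isSome) :
    cnt X (i + 1) = cnt X i := by rw [cnt_succ, if_neg h]; rfl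

theorem cnt_eq_zero {X : HatBaire} {i : ℕ} :
    cnt X i = 0 ↔ ∀ j < i, ¬ (X j).isSome := by
  induction i with
  | zero => simp [cnt_zero]
  | succ i ih =>
    rw [cnt_succ]
    constructor
    · intro h j hj
      have h1 : cnt X i = 0 := by omega
      have h2 : ¬ ((if (X i).isSome then 1 else 0) = 1) → ¬ (X i).isSome := by
        intro hh hs; exact hh (by simp [hs])
      rcases Nat.lt_succ_iff_lt_or_eq.mp hj with hj' | hj'
      · exact ih.mp h1 j hj'
      · subst hj'; exact h2 (by omega)
    · intro h
      have h1 : cnt X i = 0 := ih.mpr fun j hj => h j (Nat.lt_succ_of_lt hj)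
      have h2 : ¬ (X i).isSome := h i (Nat.lt_succ_self i)
      simp [h1, h2]

theorem cnt_congr_of_none {X : HatBaire} {a b : ℕ} (hab : a ≤ b)
    (h : ∀ j, a ≤ j → j < b → ¬ (X j).isSome) : cnt X b = cnt X a := by
  induction b with
  | zero => obtain rfl : a = 0 := by omega
            rfl
  | succ b ih =>
    rcases Nat.lt_succ_iff_lt_or_eq.mp (Nat.lt_succ_of_le hab) with hb | hb
    · have h2 : cnt X b = cnt X a := ih (by omega) fun j hj1 hj2 => h j hj1 (by omega)
      rw [cnt_succ, if_neg (h b (by omega) (Nat.lt_succ_self b)), h2]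
      rfl
    · subst hb; rfl

theorem cnt_ext {X Y : HatBaire} {i : ℕ} (h : ∀ j < i, X j = Y j) : cnt X i = cnt Y i := by
  induction i with
  | zero => rfl
  | succ i ih =>
    rw [cnt_succ, cnt_succ, h i (Nat.lt_succ_self i),
      ih fun j hj => h j (Nat.lt_succ_of_lt hj)]

theorem nthSome_eq_some_iff {X : HatBaire} {p i : ℕ} :
    nthSome X p = some i ↔ (X i).isSome ∧ cnt X i = p := by
  induction p generalizing i with
  | zero =>
    simp only [nthSome]
    split
    · rename_i hex
      constructor
      · intro h
        have hi : i = Nat.find hex := by injection h; omega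
        subst hi
        exact ⟨Nat.find_spec hex, cnt_eq_zero.mpr fun j hj => Nat.find_min hex hj⟩
      · rintro ⟨h1, h2⟩
        have : Nat.find hex = i :=
          (Nat.find_eq_iff hex).mpr ⟨h1, fun j hj => cnt_eq_zero.mp h2 j hj⟩
        rw [this]
    · rename_i hex
      constructor
      · intro h; exact absurd h (by simp)
      · rintro ⟨h1, _⟩; exact absurd ⟨i, h1⟩ hex
  | succ p ih =>
    simp only [nthSome]
    cases hprev : nthSome X p with
    | none =>
      simp only []
      constructor
      · intro h; exact absurd h (by simp)
      · rintro ⟨h1, h2⟩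
        exfalso
        -- there must be a previous some
        have hpos : 0 < cnt X i := by omega
        have hex : ∃ j, j < i ∧ (X j).isSome := by
          by_contra hc
          push_neg at hc
          have : cnt X i = 0 := cnt_eq_zero.mpr fun j hj => hc j hj
          omega
        obtain ⟨j0, hj0i, hj0s⟩ := hex
        -- findGreatest
        set i' := Nat.findGreatest (fun j => (X j).isSome) (i - 1) with hi'
        have hi's : (X i').isSome :=
          Nat.findGreatest_spec (P := fun j => (X j).isSome) (by omega) hj0s
        have hi'lt : i' < i := by
          have : i' ≤ i - 1 := Nat.findGreatest_le _
          omega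
        have hnone : ∀ j, i' < j → j < i → ¬ (X j).isSome := fun j h1 h2 =>
          Nat.findGreatest_is_greatest h1 (by omega)
        have hcnt : cnt X i = cnt X i' + 1 := by
          have e1 : cnt X i = cnt X (i' + 1) :=
            cnt_congr_of_none (by omega) fun j hj1 hj2 => hnone j (by omega) hj2
          rw [e1, cnt_succ_of_isSome hi's]
        have : nthSome X p = some i' := ih.mpr ⟨hi's, by omega⟩
        rw [this] at hprev; exact absurd hprev (by simp)
    | some i' =>
      have hi' := ih.mp hprev
      simp only []
      split
      · rename_i hex
        constructor
        · intro h
          have hi : i = Nat.find hex := by injection h; omega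
          subst hi
          obtain ⟨hgt, hs⟩ := Nat.find_spec hex
          refine ⟨hs, ?_⟩
          have e1 : cnt X (Nat.find hex) = cnt X (i' + 1) := by
            apply cnt_congr_of_none (by omega)
            intro j hj1 hj2 hjs
            exact Nat.find_min hex hj2 ⟨by omega, hjs⟩
          rw [e1, cnt_succ_of_isSome hi'.1, hi'.2]
        · rintro ⟨h1, h2⟩
          have hgt : i' < i := by
            rcases lt_trichotomy i' i with h | h | h
            · exact h
            · exfalso; subst h; omega
            · exfalso
              have : cnt X i' = cnt X i + (cnt X i' - cnt X i) := by
                have := cnt_mono X (le_of_lt h)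
                omega
              have hle : cnt X (i + 1) ≤ cnt X i' :=
                cnt_mono X h
              rw [cnt_succ_of_isSome h1] at hle
              omega
          have : Nat.find hex = i := by
            apply (Nat.find_eq_iff hex).mpr
            refine ⟨⟨hgt, h1⟩, fun j hj => ?_⟩
            rintro ⟨hj1, hjs⟩
            -- j between i' and i with X j some: cnt would be too big
            have h3 : cnt X (j + 1) = cnt X j + 1 := cnt_succ_of_isSome hjs
            have h4 : cnt X (i' + 1) ≤ cnt X j :=
              cnt_mono X hj1
            have h5 : cnt X (j + 1) ≤ cnt X i :=
              cnt_mono X hj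
            rw [cnt_succ_of_isSome hi'.1, hi'.2] at h4
            omega
          rw [this]
      · rename_i hex
        constructor
        · intro h; exact absurd h (by simp)
        · rintro ⟨h1, h2⟩
          exfalso
          apply hex
          refine ⟨i, ?_, h1⟩
          rcases lt_trichotomy i' i with h | h | h
          · exact h
          · subst h; omega
          · exfalso
            have hle : cnt X (i + 1) ≤ cnt X i' :=
              cnt_mono X h
            rw [cnt_succ_of_isSome h1] at hle
            omega

theorem nthSome_eq_none_iff {X : HatBaire} {p : ℕ} :
    nthSome X p = none ↔ ∀ i, ¬ ((X i).isSome ∧ cnt X i = p) := by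
  cases h : nthSome X p with
  | none =>
    simp only [true_iff]
    intro i ⟨h1, h2⟩
    rw [nthSome_eq_some_iff.mpr ⟨h1, h2⟩] at h
    exact absurd h (by simp)
  | some i =>
    simp only [reduceCtorEq, false_iff, not_forall, not_not]
    exact ⟨i, nthSome_eq_some_iff.mp h⟩

theorem nthSome_determined {X Y : HatBaire} {p i : ℕ} (h : ∀ j ≤ i, Y j = X j)
    (hX : nthSome X p = some i) : nthSome Y p = some i := by
  obtain ⟨h1, h2⟩ := nthSome_eq_some_iff.mp hX
  refine nthSome_eq_some_iff.mpr ⟨?_, ?_⟩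
  · rw [h i le_rfl]; exact h1
  · rw [cnt_ext fun j hj => h j (le_of_lt hj)]; exact h2

theorem strip_get? (X : HatBaire) (p : ℕ) :
    (strip X).get? p = (nthSome X p).bind fun i => X i := rfl

theorem strip_get?_eq_some_iff {X : HatBaire} {p : ℕ} {v : ℕ} :
    (strip X).get? p = some v ↔ ∃ i, nthSome X p = some i ∧ X i = some v := by
  rw [strip_get?]
  cases h : nthSome X p with
  | none => simp
  | some i => simp

theorem strip_get?_eq_none_iff {X : HatBaire} {p : ℕ} :
    (strip X).get? p = none ↔ nthSome X p = none := by
  rw [strip_get?]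
  cases h : nthSome X p with
  | none => simp
  | some i =>
    have := nthSome_isSome X p i h
    simp only [Option.bind_some, iff_false, reduceCtorEq, ne_eq]
    intro hc
    rw [hc] at this; simp at this

/-- shift of a sequence -/
theorem cnt_shift (X : HatBaire) (i : ℕ) :
    cnt X (i + 1) = (if (X 0).isSome then 1 else 0) + cnt (fun n => X (n + 1)) i := by
  induction i with
  | zero => simp [cnt_succ, cnt_zero]
  | succ i ih =>
    rw [cnt_succ, ih]
    have : cnt (fun n => X (n + 1)) (i + 1)
        = cnt (fun n => X (n + 1)) i + if (X (i + 1)).isSome then 1 else 0 :=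
      cnt_succ _ i
    rw [this]; ring

theorem nthSome_cons_none {X : HatBaire} (h : X 0 = none) (p : ℕ) :
    nthSome X p = (nthSome (fun n => X (n + 1)) p).map (· + 1) := by
  cases hr : nthSome (fun n => X (n + 1)) p with
  | some i =>
    obtain ⟨h1, h2⟩ := nthSome_eq_some_iff.mp hr
    simp only [Option.map_some]
    refine nthSome_eq_some_iff.mpr ⟨h1, ?_⟩
    rw [cnt_shift, h]; simpa using h2
  | none =>
    simp only [Option.map_none]
    refine nthSome_eq_none_iff.mpr fun i => ?_
    rintro ⟨h1, h2⟩
    cases i with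
    | zero => rw [h] at h1; simp at h1
    | succ j =>
      have : nthSome (fun n => X (n + 1)) p = some j := by
        refine nthSome_eq_some_iff.mpr ⟨h1, ?_⟩
        rw [cnt_shift, h] at h2; simpa using h2
      rw [this] at hr; exact absurd hr (by simp)

theorem nthSome_cons_some_zero {X : HatBaire} (h : (X 0).isSome) :
    nthSome X 0 = some 0 := nthSome_eq_some_iff.mpr ⟨h, cnt_zero X⟩

theorem nthSome_cons_some {X : HatBaire} (h : (X 0).isSome) (p : ℕ) :
    nthSome X (p + 1) = (nthSome (fun n => X (n + 1)) p).map (· + 1) := by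
  cases hr : nthSome (fun n => X (n + 1)) p with
  | some i =>
    obtain ⟨h1, h2⟩ := nthSome_eq_some_iff.mp hr
    simp only [Option.map_some]
    refine nthSome_eq_some_iff.mpr ⟨h1, ?_⟩
    rw [cnt_shift, if_pos h, h2]
    omega
  | none =>
    simp only [Option.map_none]
    refine nthSome_eq_none_iff.mpr fun i => ?_
    rintro ⟨h1, h2⟩
    cases i with
    | zero => rw [cnt_zero] at h2; omega
    | succ j =>
      have : nthSome (fun n => X (n + 1)) p = some j := by
        refine nthSome_eq_some_iff.mpr ⟨h1, ?_⟩
        rw [cnt_shift, if_pos h] at h2; omega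
      rw [this] at hr; exact absurd hr (by simp)

theorem strip_get?_cons_none {X : HatBaire} (h : X 0 = none) (p : ℕ) :
    (strip X).get? p = (strip (fun n => X (n + 1))).get? p := by
  rw [strip_get?, strip_get?, nthSome_cons_none h]
  cases nthSome (fun n => X (n + 1)) p <;> simp

theorem strip_get?_cons_some_zero {X : HatBaire} {a : ℕ} (h : X 0 = some a) :
    (strip X).get? 0 = some a := by
  rw [strip_get?, nthSome_cons_some_zero (by simp [h]), Option.bind_some, h]

theorem strip_get?_cons_some {X : HatBaire} {a : ℕ} (h : X 0 = some a) (p : ℕ) :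
    (strip X).get? (p + 1) = (strip (fun n => X (n + 1))).get? p := by
  rw [strip_get?, strip_get?, nthSome_cons_some (by simp [h])]
  cases nthSome (fun n => X (n + 1)) p <;> simp

/-! #### Topological lemmas -/

theorem clopen_of_determined {A : Set HatBaire} (n : ℕ)
    (h : ∀ X Y : HatBaire, (∀ i < n, X i = Y i) → (X ∈ A ↔ Y ∈ A)) : IsClopen A := by
  classical
  let r : HatBaire → (Fin n → Hat) := fun X i => X i
  have hr : Continuous r := continuous_pi fun i => continuous_apply _
  let ext : (Fin n → Hat) → HatBaire := fun v i => if hi : i < n then v ⟨i, hi⟩ else none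
  have hA : A = r ⁻¹' {v | ext v ∈ A} := by
    ext X
    simp only [Set.mem_preimage, Set.mem_setOf_eq]
    exact h X (ext (r X)) (fun i hi => by simp [ext, r, hi])
  rw [hA]
  exact (isClopen_discrete _).preimage hr

theorem continuous_of_determined {α : Type*} [TopologicalSpace α] [DiscreteTopology α]
    {f : HatBaire → α} (n : ℕ)
    (h : ∀ X Y : HatBaire, (∀ i < n, X i = Y i) → f X = f Y) : Continuous f := by
  classical
  let r : HatBaire → (Fin n → Hat) := fun X i => X i
  have hr : Continuous r := continuous_pi fun i => continuous_apply _
  let ext : (Fin n → Hat) → HatBaire := fun v i => if hi : i < n then v ⟨i, hi⟩ else none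
  have : f = (fun v => f (ext v)) ∘ r := by
    funext X
    exact h X (ext (r X)) (fun i hi => by simp [ext, r, hi])
  rw [this]
  exact continuous_of_discreteTopology.comp hr

theorem exists_prefix_of_isOpen {A : Set HatBaire} (hA : IsOpen A) {X : HatBaire}
    (hX : X ∈ A) : ∃ n, ∀ Y : HatBaire, (∀ i < n, Y i = X i) → Y ∈ A := by
  obtain ⟨I, u, h1, h2⟩ := isOpen_pi_iff.mp hA X hX
  refine ⟨(I.sup id) + 1, fun Y hY => ?_⟩
  apply h2
  intro i hi
  have : i ≤ I.sup id := Finset.le_sup (f := id) hi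
  rw [hY i (by omega)]
  exact (h1 i hi).2

/-! #### `Σ⁰₂` machinery -/

theorem ordinal_one_lt_two : (1 : Ordinal.{0}) < 2 := by
  rw [← one_add_one_eq_two]; exact ord_lt_add_one 1

theorem sigmaZero_one_le {T : Type*} [TopologicalSpace T] {α : Ordinal.{0}} {s : Set T}
    (h : SigmaZero T α s) : 1 ≤ α := by
  induction h with
  | of_isOpen h => exact le_rfl
  | iUnion hα f β hβ hf ih => exact le_of_lt hα

theorem sigmaZero_one_isOpen {T : Type*} [TopologicalSpace T] {s : Set T}
    (h : SigmaZero T 1 s) : IsOpen s := by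
  have key : ∀ (α : Ordinal.{0}) (s : Set T), SigmaZero T α s → α = 1 → IsOpen s := by
    intro α s h
    induction h with
    | of_isOpen h => intro _; exact h
    | iUnion hα f β hβ hf ih =>
      intro he; rw [he] at hα; exact absurd hα (lt_irrefl _)
  exact key 1 s h rfl

/-- `Σ⁰₂` subsets of `ω̂^ω`. -/
def Sig2 (s : Set HatBaire) : Prop := SigmaZero HatBaire 2 s

theorem sig2_iff {s : Set HatBaire} :
    Sig2 s ↔ ∃ f : ℕ → Set HatBaire, (∀ n, IsClosed (f n)) ∧ s = ⋃ n, f n := by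
  constructor
  · intro h
    have key : ∀ (α : Ordinal.{0}) (s : Set HatBaire), SigmaZero HatBaire α s → α = 2 →
        ∃ f : ℕ → Set HatBaire, (∀ n, IsClosed (f n)) ∧ s = ⋃ n, f n := by
      intro α s h
      induction h with
      | of_isOpen h => intro he; exact absurd he (ne_of_lt ordinal_one_lt_two)
      | iUnion hα f β hβ hf ih =>
        intro he
        refine ⟨f, fun n => ?_, rfl⟩
        have h1 : β n = 1 := by
          have hle : 1 ≤ β n := sigmaZero_one_le (hf n)
          have hlt : β n < 2 := he ▸ hβ n
          have h2 : β n ≤ 1 := by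
            rw [← one_add_one_eq_two, Ordinal.add_one_eq_succ] at hlt
            exact Order.lt_succ_iff.mp hlt
          exact le_antisymm h2 hle
        exact isOpen_compl_iff.mp (sigmaZero_one_isOpen (h1 ▸ hf n))
    exact key 2 s h rfl
  · rintro ⟨f, hcl, rfl⟩
    exact SigmaZero.iUnion ordinal_one_lt_two f (fun _ => 1) (fun _ => ordinal_one_lt_two)
      (fun n => SigmaZero.of_isOpen (hcl n).isOpen_compl)

theorem Sig2_of_isClosed {s : Set HatBaire} (h : IsClosed s) : Sig2 s :=
  sig2_iff.mpr ⟨fun _ => s, fun _ => h, (Set.iUnion_const s).symm⟩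

theorem Sig2_empty : Sig2 ∅ := Sig2_of_isClosed isClosed_empty

theorem Sig2_univ : Sig2 Set.univ := Sig2_of_isClosed isClosed_univ

theorem Sig2_iUnion {f : ℕ → Set HatBaire} (h : ∀ n, Sig2 (f n)) : Sig2 (⋃ n, f n) := by
  choose g hg1 hg2 using fun n => sig2_iff.mp (h n)
  refine sig2_iff.mpr ⟨fun k => g (Nat.unpair k).1 (Nat.unpair k).2, fun k => hg1 _ _, ?_⟩
  ext x
  simp only [Set.mem_iUnion]
  constructor
  · rintro ⟨n, hx⟩
    rw [hg2 n] at hx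
    obtain ⟨m, hm⟩ := Set.mem_iUnion.mp hx
    exact ⟨Nat.pair n m, by simpa [Nat.unpair_pair] using hm⟩
  · rintro ⟨k, hk⟩
    exact ⟨(Nat.unpair k).1, by rw [hg2]; exact Set.mem_iUnion.mpr ⟨_, hk⟩⟩

theorem Sig2_iUnion_enc {ι : Type} [Encodable ι] {f : ι → Set HatBaire}
    (h : ∀ i, Sig2 (f i)) : Sig2 (⋃ i, f i) := by
  have key : (⋃ i, f i) = ⋃ n : ℕ, (Encodable.decode (α := ι) n).elim ∅ f := by
    ext x
    simp only [Set.mem_iUnion]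
    constructor
    · rintro ⟨i, hi⟩
      exact ⟨Encodable.encode i, by simpa [Encodable.encodek] using hi⟩
    · rintro ⟨n, hn⟩
      cases hd : Encodable.decode (α := ι) n with
      | none => rw [hd] at hn; simp at hn
      | some i => rw [hd] at hn; exact ⟨i, hn⟩
  rw [key]
  apply Sig2_iUnion
  intro n
  cases Encodable.decode (α := ι) n with
  | none => exact Sig2_empty
  | some i => exact h i

theorem Sig2_inter {s t : Set HatBaire} (hs : Sig2 s) (ht : Sig2 t) : Sig2 (s ∩ t) := by
  obtain ⟨f, hf1, rfl⟩ := sig2_iff.mp hs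
  obtain ⟨g, hg1, rfl⟩ := sig2_iff.mp ht
  refine sig2_iff.mpr ⟨fun k => f (Nat.unpair k).1 ∩ g (Nat.unpair k).2,
    fun k => (hf1 _).inter (hg1 _), ?_⟩
  ext x
  simp only [Set.mem_inter_iff, Set.mem_iUnion]
  constructor
  · rintro ⟨⟨n, hn⟩, ⟨m, hm⟩⟩
    exact ⟨Nat.pair n m, by simp only [Nat.unpair_pair]; exact ⟨hn, hm⟩⟩
  · rintro ⟨k, hk1, hk2⟩
    exact ⟨⟨_, hk1⟩, ⟨_, hk2⟩⟩

theorem Sig2_iInter_fin : ∀ {n : ℕ} (f : Fin n → Set HatBaire),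
    (∀ i, Sig2 (f i)) → Sig2 (⋂ i, f i) := by
  intro n
  induction n with
  | zero => intro f h; rw [Set.iInter_of_empty]; exact Sig2_univ
  | succ n ih =>
    intro f h
    have key : (⋂ i, f i) = f 0 ∩ ⋂ i : Fin n, f i.succ := by
      ext x
      simp only [Set.mem_iInter, Set.mem_inter_iff]
      constructor
      · intro hx; exact ⟨hx 0, fun i => hx i.succ⟩
      · rintro ⟨h0, hs⟩ i
        induction i using Fin.cases with
        | zero => exact h0
        | succ i => exact hs i
    rw [key]
    exact Sig2_inter (h 0) (ih _ fun i => h i.succ)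

theorem cylH_isClopen (σ : List Hat) : IsClopen (cylH σ) := by
  apply clopen_of_determined σ.length
  intro X Y h
  simp only [cylH, Set.mem_setOf_eq]
  constructor <;> intro hx i
  · rw [← h i i.isLt]; exact hx i
  · rw [h i i.isLt]; exact hx i

theorem Sig2_of_isOpen {A : Set HatBaire} (h : IsOpen A) : Sig2 A := by
  have key : A = ⋃ σ : List Hat, (if cylH σ ⊆ A then cylH σ else ∅) := by
    ext X
    simp only [Set.mem_iUnion]
    constructor
    · intro hX
      obtain ⟨n, hn⟩ := exists_prefix_of_isOpen h hX
      refine ⟨List.ofFn (fun i : Fin n => X i), ?_⟩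
      have hsub : cylH (List.ofFn fun i : Fin n => X i) ⊆ A := by
        intro Y hY
        apply hn
        intro i hi
        have h2 := hY ⟨i, by simpa using hi⟩
        simpa using h2
      rw [if_pos hsub]
      intro i
      simp [List.get_ofFn]
    · rintro ⟨σ, hσ⟩
      by_cases hsub : cylH σ ⊆ A
      · rw [if_pos hsub] at hσ; exact hsub hσ
      · rw [if_neg hsub] at hσ; exact absurd hσ (Set.notMem_empty X)
  rw [key]
  refine Sig2_iUnion_enc fun σ => ?_
  by_cases hsub : cylH σ ⊆ A
  · rw [if_pos hsub]; exact Sig2_of_isClosed (cylH_isClopen σ).isClosed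
  · rw [if_neg hsub]; exact Sig2_empty

/-! #### The universal function `Ufun` -/

/-- One step of the length dynamics: an even move `2v` appends `v`, an odd move `2k+1`
truncates the output to length at most `k`. -/
def stepLen (L m : ℕ) : ℕ := if m % 2 = 0 then L + 1 else min (m / 2) L

/-- The length of the output after the first `k` moves. -/
def lenAt (s : Stream'.Seq ℕ) : ℕ → ℕ
  | 0 => 0
  | k + 1 =>
    match s.get? k with
    | some m => stepLen (lenAt s k) m
    | none => lenAt s k

/-- The universal `Σ⁰₂` function: the `p`-th output cell holds `v` iff the `p`-th move of
(the pass-deleted) `X` is `2v` (an append), and no later move truncates at or below the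
position where this append lands. -/
def Ufun (X : HatBaire) : HatBaire := fun p =>
  match (strip X).get? p with
  | none => none
  | some m =>
    if m % 2 = 0 ∧ ∀ q m', p < q → (strip X).get? q = some m' →
        m' % 2 = 0 ∨ lenAt (strip X) p < m' / 2
    then some (m / 2) else none

theorem Ufun_strip_eq {X Y : HatBaire} (h : strip X = strip Y) : Ufun X = Ufun Y := by
  unfold Ufun; rw [h]

theorem Ufun_conciliatory : ConciliatoryF Ufun := fun X Y h => by rw [Ufun_strip_eq h]

theorem seq_isSome_mono {α : Type*} {s : Stream'.Seq α} {j p : ℕ} (h : j ≤ p)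
    (hp : (s.get? p).isSome) : (s.get? j).isSome := by
  induction p with
  | zero =>
    obtain rfl : j = 0 := by omega
    exact hp
  | succ p ih =>
    rcases Nat.lt_succ_iff_lt_or_eq.mp (Nat.lt_succ_of_le h) with hj | hj
    · apply ih (by omega)
      by_contra hc
      have h2 : s.get? p = none := by
        cases hh : s.get? p
        · rfl
        · rw [hh] at hc; simp at hc
      have h3 : s.get? (p + 1) = none := s.2 h2
      rw [h3] at hp; simp at hp
    · subst hj; exact hp

/-! Basic clopen/open building blocks. -/

theorem isClopen_nthSome (p i : ℕ) : IsClopen {X : HatBaire | nthSome X p = some i} := by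
  apply clopen_of_determined (i + 1)
  intro X Y h
  simp only [Set.mem_setOf_eq]
  constructor
  · exact fun hX => nthSome_determined (fun j hj => (h j (by omega)).symm) hX
  · exact fun hY => nthSome_determined (fun j hj => h j (by omega)) hY

theorem isClopen_coord (i : ℕ) (a : Hat) : IsClopen {X : HatBaire | X i = a} := by
  apply clopen_of_determined (i + 1)
  intro X Y h
  simp only [Set.mem_setOf_eq, h i (by omega)]

theorem isOpen_stripGet_some (p m : ℕ) :
    IsOpen {X : HatBaire | (strip X).get? p = some m} := by
  have key : {X : HatBaire | (strip X).get? p = some m}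
      = ⋃ i : ℕ, {X | nthSome X p = some i} ∩ {X | X i = some m} := by
    ext X
    simp only [Set.mem_setOf_eq, Set.mem_iUnion, Set.mem_inter_iff]
    exact strip_get?_eq_some_iff
  rw [key]
  exact isOpen_iUnion fun i => ((isClopen_nthSome p i).isOpen).inter
    ((isClopen_coord i (some m)).isOpen)

theorem isClosed_stripGet_none (p : ℕ) :
    IsClosed {X : HatBaire | (strip X).get? p = none} := by
  rw [← isOpen_compl_iff]
  have key : {X : HatBaire | (strip X).get? p = none}ᶜ
      = ⋃ m : ℕ, {X | (strip X).get? p = some m} := by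
    ext X
    simp only [Set.mem_compl_iff, Set.mem_setOf_eq, Set.mem_iUnion]
    constructor
    · intro h
      cases hh : (strip X).get? p with
      | none => exact absurd hh h
      | some m => exact ⟨m, rfl⟩
    · rintro ⟨m, hm⟩ hc
      rw [hc] at hm; exact absurd hm (by simp)
  rw [key]
  exact isOpen_iUnion fun m => isOpen_stripGet_some p m

/-- The set of `X` whose run gets a truncation at level `≤ l` after time `p`. -/
def KillSet (p l : ℕ) : Set HatBaire :=
  {X | ∃ q m', p < q ∧ (strip X).get? q = some m' ∧ m' % 2 = 1 ∧ m' / 2 ≤ l}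

theorem isOpen_KillSet (p l : ℕ) : IsOpen (KillSet p l) := by
  have key : KillSet p l = ⋃ q : ℕ, ⋃ m' : ℕ,
      if p < q ∧ m' % 2 = 1 ∧ m' / 2 ≤ l then {X | (strip X).get? q = some m'} else ∅ := by
    ext X
    simp only [KillSet, Set.mem_setOf_eq, Set.mem_iUnion]
    constructor
    · rintro ⟨q, m', h1, h2, h3, h4⟩
      exact ⟨q, m', by rw [if_pos ⟨h1, h3, h4⟩]; exact h2⟩
    · rintro ⟨q, m', hm⟩
      by_cases hc : p < q ∧ m' % 2 = 1 ∧ m' / 2 ≤ l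
      · rw [if_pos hc] at hm; exact ⟨q, m', hc.1, hm, hc.2.1, hc.2.2⟩
      · rw [if_neg hc] at hm; exact absurd hm (Set.notMem_empty X)
  rw [key]
  refine isOpen_iUnion fun q => isOpen_iUnion fun m' => ?_
  by_cases hc : p < q ∧ m' % 2 = 1 ∧ m' / 2 ≤ l
  · rw [if_pos hc]; exact isOpen_stripGet_some q m'
  · rw [if_neg hc]; exact isOpen_empty

/-- The set of `X` whose first `l.length` moves are given by the list `l`. -/
def TakeSet (l : List ℕ) : Set HatBaire :=
  {X | ∀ j : Fin l.length, (strip X).get? j = some (l.get j)}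

theorem isOpen_TakeSet (l : List ℕ) : IsOpen (TakeSet l) := by
  have key : TakeSet l = ⋂ j : Fin l.length, {X | (strip X).get? j = some (l.get j)} := by
    ext X; simp [TakeSet, Set.mem_iInter]
  rw [key]
  exact isOpen_iInter_of_finite fun j => isOpen_stripGet_some _ _

def lenList (l : List ℕ) : ℕ := l.foldl stepLen 0

theorem lenAt_eq_of_takeSet {X : HatBaire} {l : List ℕ} (h : X ∈ TakeSet l) :
    lenAt (strip X) l.length = lenList l := by
  induction l using List.reverseRecOn with
  | nil => rfl
  | append_singleton l a ih =>
    have hmem : X ∈ TakeSet l := by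
      intro j
      have h2 := h ⟨j, by simp⟩
      rw [h2]
      congr 1
      rw [List.get_eq_getElem, List.get_eq_getElem, List.getElem_append_left]
    have hget : (strip X).get? l.length = some a := by
      have h2 := h ⟨l.length, by simp⟩
      rw [h2]
      congr 1
      rw [List.get_eq_getElem]
      exact List.getElem_concat_length (l := l) (a := a) rfl (by simp)
    have hlen : (l ++ [a]).length = l.length + 1 := by simp
    rw [hlen]
    show (match (strip X).get? l.length with
      | some m => stepLen (lenAt (strip X) l.length) m
      | none => lenAt (strip X) l.length) = lenList (l ++ [a])
    rw [hget, ih hmem]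
    simp [lenList, List.foldl_append]

theorem Ufun_of_get {X : HatBaire} {p m : ℕ} (hget : (strip X).get? p = some m) :
    Ufun X p = if m % 2 = 0 ∧ ∀ q m', p < q → (strip X).get? q = some m' →
        m' % 2 = 0 ∨ lenAt (strip X) p < m' / 2
      then some (m / 2) else none := by
  unfold Ufun
  rw [hget]

theorem Ufun_of_none {X : HatBaire} {p : ℕ} (h : (strip X).get? p = none) :
    Ufun X p = none := by
  unfold Ufun
  rw [h]

/-- The canonical list of the first `p` moves. -/
def firstMoves (X : HatBaire) (p : ℕ) : List ℕ :=
  List.ofFn (fun j : Fin p => ((strip X).get? j).getD 0)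

theorem firstMoves_mem {X : HatBaire} {p : ℕ} (hsome : ∀ j < p, ((strip X).get? j).isSome) :
    X ∈ TakeSet (firstMoves X p) := by
  intro j
  have hj : (j : ℕ) < p := by
    have h2 := j.isLt; simpa [firstMoves] using h2
  have hs := hsome j hj
  cases hh : (strip X).get? j with
  | none => rw [hh] at hs; simp at hs
  | some w => rw [List.get_eq_getElem]; simp [firstMoves, hh]

theorem firstMoves_length (X : HatBaire) (p : ℕ) : (firstMoves X p).length = p := by
  simp [firstMoves]

theorem Ufun_eq_some_iff {X : HatBaire} {p v : ℕ} :
    Ufun X p = some v ↔ ∃ l : List ℕ, l.length = p ∧ X ∈ TakeSet l ∧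
      (strip X).get? p = some (2 * v) ∧ X ∉ KillSet p (lenList l) := by
  constructor
  · intro h
    cases hget : (strip X).get? p with
    | none => rw [Ufun_of_none hget] at h; simp at h
    | some m =>
      rw [Ufun_of_get hget] at h
      by_cases hc : m % 2 = 0 ∧ ∀ q m', p < q → (strip X).get? q = some m' →
          m' % 2 = 0 ∨ lenAt (strip X) p < m' / 2
      · rw [if_pos hc] at h
        have hv : m = 2 * v := by
          have h2 : m / 2 = v := by injection h
          omega
        have hsome : ∀ j < p, ((strip X).get? j).isSome :=
          fun j hj => seq_isSome_mono (le_of_lt hj) (by rw [hget]; rfl)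
        refine ⟨firstMoves X p, firstMoves_length X p, firstMoves_mem hsome, ?_, ?_⟩
        · rw [hv]
        · intro hkill
          obtain ⟨q, m', h1, h2, h3, h4⟩ := hkill
          have hlen : lenAt (strip X) p = lenList (firstMoves X p) := by
            have h5 := lenAt_eq_of_takeSet (firstMoves_mem hsome)
            rwa [firstMoves_length] at h5
          rcases hc.2 q m' h1 h2 with h5 | h5
          · omega
          · rw [hlen] at h5; omega
      · rw [if_neg hc] at h; simp at h
  · rintro ⟨l, hl, hmem, hget, hkill⟩
    rw [Ufun_of_get hget]
    have hlen : lenAt (strip X) p = lenList l := by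
      rw [← hl]; exact lenAt_eq_of_takeSet hmem
    rw [if_pos ?_]
    · simp [Nat.mul_div_cancel_left v (by norm_num : 0 < 2)]
    · refine ⟨by omega, fun q m' hq hgq => ?_⟩
      by_contra hc
      push_neg at hc
      exact hkill ⟨q, m', hq, hgq, by omega, by rw [← hlen]; omega⟩

theorem Ufun_eq_none_iff {X : HatBaire} {p : ℕ} :
    Ufun X p = none ↔ ((strip X).get? p = none ∨
      (∃ m, m % 2 = 1 ∧ (strip X).get? p = some m) ∨
      (∃ l m, l.length = p ∧ m % 2 = 0 ∧ X ∈ TakeSet l ∧ (strip X).get? p = some m ∧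
        X ∈ KillSet p (lenList l))) := by
  constructor
  · intro h
    cases hget : (strip X).get? p with
    | none => exact Or.inl rfl
    | some m =>
      by_cases hpar : m % 2 = 1
      · exact Or.inr (Or.inl ⟨m, hpar, rfl⟩)
      · have hv : m = 2 * (m / 2) := by omega
        have h2 : Ufun X p ≠ some (m / 2) := by rw [h]; simp
        right; right
        have hsome : ∀ j < p, ((strip X).get? j).isSome :=
          fun j hj => seq_isSome_mono (le_of_lt hj) (by rw [hget]; rfl)
        refine ⟨firstMoves X p, m, firstMoves_length X p, by omega, firstMoves_mem hsome,
          rfl, ?_⟩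
        by_contra hkill
        exact h2 (Ufun_eq_some_iff.mpr ⟨firstMoves X p, firstMoves_length X p,
          firstMoves_mem hsome, by rw [hget, ← hv], hkill⟩)
  · intro h
    rcases h with h | ⟨m, hm, hget⟩ | ⟨l, m, hl, hm, hmem, hget, hkill⟩
    · exact Ufun_of_none h
    · rw [Ufun_of_get hget, if_neg]
      rintro ⟨h1, _⟩
      omega
    · rw [Ufun_of_get hget, if_neg]
      rintro ⟨h1, h2⟩
      obtain ⟨q, m', hq1, hq2, hq3, hq4⟩ := hkill
      have hlen : lenAt (strip X) p = lenList l := by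
        rw [← hl]; exact lenAt_eq_of_takeSet hmem
      rcases h2 q m' hq1 hq2 with h3 | h3
      · omega
      · rw [hlen] at h3; omega

theorem Sig2_union {s t : Set HatBaire} (hs : Sig2 s) (ht : Sig2 t) : Sig2 (s ∪ t) := by
  have key : s ∪ t = ⋃ n : ℕ, (if n = 0 then s else t) := by
    ext x
    simp only [Set.mem_union, Set.mem_iUnion]
    constructor
    · rintro (h | h)
      · exact ⟨0, by simpa⟩
      · exact ⟨1, by simpa⟩
    · rintro ⟨n, hn⟩
      by_cases h : n = 0
      · rw [if_pos h] at hn; exact Or.inl hn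
      · rw [if_neg h] at hn; exact Or.inr hn
  rw [key]
  apply Sig2_iUnion
  intro n
  by_cases h : n = 0
  · rw [if_pos h]; exact hs
  · rw [if_neg h]; exact ht

theorem Sig2_Ufun_some (p v : ℕ) : Sig2 {X : HatBaire | Ufun X p = some v} := by
  have key : {X : HatBaire | Ufun X p = some v} = ⋃ l : List ℕ,
      (if l.length = p then
        (TakeSet l ∩ {X | (strip X).get? p = some (2 * v)}) ∩ (KillSet p (lenList l))ᶜ
      else ∅) := by
    ext X
    simp only [Set.mem_setOf_eq, Set.mem_iUnion]
    rw [Ufun_eq_some_iff]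
    constructor
    · rintro ⟨l, h1, h2, h3, h4⟩
      exact ⟨l, by rw [if_pos h1]; exact ⟨⟨h2, h3⟩, h4⟩⟩
    · rintro ⟨l, hl⟩
      by_cases hc : l.length = p
      · rw [if_pos hc] at hl; exact ⟨l, hc, hl.1.1, hl.1.2, hl.2⟩
      · rw [if_neg hc] at hl; exact absurd hl (Set.notMem_empty X)
  rw [key]
  refine Sig2_iUnion_enc fun l => ?_
  by_cases hc : l.length = p
  · rw [if_pos hc]
    refine Sig2_inter (Sig2_of_isOpen ((isOpen_TakeSet l).inter (isOpen_stripGet_some p (2 * v))))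
      (Sig2_of_isClosed ?_)
    rw [isClosed_compl_iff]
    exact isOpen_KillSet p (lenList l)
  · rw [if_neg hc]; exact Sig2_empty

theorem Sig2_Ufun_none (p : ℕ) : Sig2 {X : HatBaire | Ufun X p = none} := by
  have key : {X : HatBaire | Ufun X p = none} =
      {X | (strip X).get? p = none} ∪
      ((⋃ m : ℕ, if m % 2 = 1 then {X | (strip X).get? p = some m} else ∅) ∪
       (⋃ q : List ℕ × ℕ, if q.1.length = p ∧ q.2 % 2 = 0 then
          (TakeSet q.1 ∩ {X | (strip X).get? p = some q.2}) ∩ KillSet p (lenList q.1)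
        else ∅)) := by
    ext X
    simp only [Set.mem_setOf_eq, Set.mem_union, Set.mem_iUnion]
    rw [Ufun_eq_none_iff]
    constructor
    · rintro (h | ⟨m, h1, h2⟩ | ⟨l, m, h1, h2, h3, h4, h5⟩)
      · exact Or.inl h
      · exact Or.inr (Or.inl ⟨m, by rw [if_pos h1]; exact h2⟩)
      · exact Or.inr (Or.inr ⟨(l, m), by rw [if_pos ⟨h1, h2⟩]; exact ⟨⟨h3, h4⟩, h5⟩⟩)
    · rintro (h | ⟨m, hm⟩ | ⟨⟨l, m⟩, hq⟩)
      · exact Or.inl h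
      · by_cases hc : m % 2 = 1
        · rw [if_pos hc] at hm; exact Or.inr (Or.inl ⟨m, hc, hm⟩)
        · rw [if_neg hc] at hm; exact absurd hm (Set.notMem_empty X)
      · by_cases hc : l.length = p ∧ m % 2 = 0
        · rw [if_pos hc] at hq
          exact Or.inr (Or.inr ⟨l, m, hc.1, hc.2, hq.1.1, hq.1.2, hq.2⟩)
        · rw [if_neg hc] at hq; exact absurd hq (Set.notMem_empty X)
  rw [key]
  refine Sig2_union (Sig2_of_isClosed (isClosed_stripGet_none p))
    (Sig2_union (Sig2_iUnion fun m => ?_) (Sig2_iUnion_enc fun q => ?_))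
  · by_cases hc : m % 2 = 1
    · rw [if_pos hc]; exact Sig2_of_isOpen (isOpen_stripGet_some p m)
    · rw [if_neg hc]; exact Sig2_empty
  · by_cases hc : q.1.length = p ∧ q.2 % 2 = 0
    · rw [if_pos hc]
      exact Sig2_of_isOpen (((isOpen_TakeSet q.1).inter (isOpen_stripGet_some p q.2)).inter
        (isOpen_KillSet p (lenList q.1)))
    · rw [if_neg hc]; exact Sig2_empty

theorem preimage_cylH_eq (Ψ : HatBaire → HatBaire) (σ : List Hat) :
    Ψ ⁻¹' cylH σ = ⋂ i : Fin σ.length, {X | Ψ X i = σ.get i} := by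
  ext X
  simp only [Set.mem_preimage, cylH, Set.mem_setOf_eq, Set.mem_iInter]

theorem Ufun_measurable : SigmaMeasurableH 2 Ufun := by
  intro σ
  rw [preimage_cylH_eq]
  refine Sig2_iInter_fin _ fun i => ?_
  cases h : σ.get i with
  | none => exact Sig2_Ufun_none (i : ℕ)
  | some v => exact Sig2_Ufun_some (i : ℕ) v

/-! #### Concatenation and initializability -/

/-- Concatenation of a finite string over `ω̂` with an element of `ω̂^ω`. -/
def appH (ρ : List Hat) (X : HatBaire) : HatBaire := fun n =>
  if h : n < ρ.length then ρ.get ⟨n, h⟩ else X (n - ρ.length)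

theorem appH_nil (X : HatBaire) : appH [] X = X := funext fun n => by simp [appH]

theorem appH_cons (a : Hat) (ρ : List Hat) (X : HatBaire) :
    (fun n => appH (a :: ρ) X (n + 1)) = appH ρ X := by
  funext n
  simp only [appH, List.length_cons]
  by_cases h : n < ρ.length
  · rw [dif_pos (by omega), dif_pos h]
    rfl
  · rw [dif_neg (by omega), dif_neg h]
    congr 1
    omega

theorem appH_zero (a : Hat) (ρ : List Hat) (X : HatBaire) : appH (a :: ρ) X 0 = a := by
  simp [appH]

theorem strip_appH_get? (ρ : List Hat) (X : HatBaire) (p : ℕ) :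
    (strip (appH ρ X)).get? p =
      if h : p < (ρ.filterMap id).length then some ((ρ.filterMap id).get ⟨p, h⟩)
      else (strip X).get? (p - (ρ.filterMap id).length) := by
  induction ρ generalizing p with
  | nil => simp [appH_nil]
  | cons a ρ ih =>
    cases a with
    | none =>
      rw [strip_get?_cons_none (appH_zero none ρ X), appH_cons, ih p]
      simp [List.filterMap_cons]
    | some v =>
      have hfm : ((some v : Hat) :: ρ).filterMap id = v :: ρ.filterMap id := by
        simp [List.filterMap_cons]
      cases p with
      | zero =>
        rw [strip_get?_cons_some_zero (appH_zero (some v) ρ X), hfm]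
        rw [dif_pos (by simp)]
        rfl
      | succ p =>
        rw [strip_get?_cons_some (appH_zero (some v) ρ X), appH_cons, ih p, hfm]
        by_cases hp : p < (ρ.filterMap id).length
        · rw [dif_pos hp, dif_pos (by simpa using Nat.succ_lt_succ hp)]
          rfl
        · rw [dif_neg hp, dif_neg (by simp only [List.length_cons]; omega)]
          congr 1
          simp only [List.length_cons]
          omega

/-- strip is invariant under a pure-pass prefix shift. -/
theorem strip_none_pad (K : ℕ) (Z W : HatBaire) (h1 : ∀ n < K, Z n = none)
    (h2 : ∀ n, Z (K + n) = W n) : strip Z = strip W := by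
  induction K generalizing Z with
  | zero =>
    have h3 : Z = W := funext fun n => by simpa using h2 n
    rw [h3]
  | succ K ih =>
    have hZ0 : Z 0 = none := h1 0 (by omega)
    have h3 : strip Z = strip (fun n => Z (n + 1)) :=
      Subtype.ext (funext fun p => strip_get?_cons_none hZ0 p)
    rw [h3]
    apply ih
    · intro n hn
      exact h1 (n + 1) (by omega)
    · intro n
      have h4 : K + n + 1 = K + 1 + n := by omega
      rw [h4]
      exact h2 n

/-- The restart list: `τ` followed by the move `1` (truncate to `0`). -/
theorem restart_key (τ : List Hat) (X : HatBaire) :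
    strip (Ufun (appH (τ ++ [some 1]) X)) = strip (Ufun X) := by
  set ρ : List Hat := τ ++ [some 1] with hρ
  set ν : List ℕ := ρ.filterMap id with hν
  set K : ℕ := ν.length with hK
  have hνlast : ν = (τ.filterMap id) ++ [1] := by
    rw [hν, hρ]; simp [List.filterMap_append]
  have hKpos : 1 ≤ K := by rw [hK, hνlast]; simp
  have hget : ∀ p, (strip (appH ρ X)).get? p =
      if h : p < K then some (ν.get ⟨p, h⟩) else (strip X).get? (p - K) :=
    fun p => strip_appH_get? ρ X p
  have hgetlast : (strip (appH ρ X)).get? (K - 1) = some 1 := by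
    rw [hget (K - 1), dif_pos (by omega)]
    congr 1
    have hlen : (τ.filterMap id).length = K - 1 := by
      rw [hK, hνlast]; simp
    rw [List.get_eq_getElem]
    have h9 : ∀ (hh : K - 1 < ν.length), ν[K - 1]'hh = 1 := by
      rw [hνlast]
      intro hh
      exact List.getElem_concat_length hlen.symm hh
    exact h9 _
  have hshift : ∀ p, (strip (appH ρ X)).get? (K + p) = (strip X).get? p := by
    intro p
    rw [hget (K + p), dif_neg (by omega)]
    congr 1
    omega
  -- lenAt at K is 0
  have hlenK : lenAt (strip (appH ρ X)) K = 0 := by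
    have hK1 : K = (K - 1) + 1 := by omega
    rw [hK1]
    show (match (strip (appH ρ X)).get? (K - 1) with
      | some m => stepLen (lenAt (strip (appH ρ X)) (K - 1)) m
      | none => lenAt (strip (appH ρ X)) (K - 1)) = 0
    rw [hgetlast]
    simp [stepLen]
  have hlen : ∀ p, lenAt (strip (appH ρ X)) (K + p) = lenAt (strip X) p := by
    intro p
    induction p with
    | zero => simpa [lenAt] using hlenK
    | succ p ihp =>
      have h4 : K + (p + 1) = (K + p) + 1 := by omega
      rw [h4]
      show (match (strip (appH ρ X)).get? (K + p) with
        | some m => stepLen (lenAt (strip (appH ρ X)) (K + p)) m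
        | none => lenAt (strip (appH ρ X)) (K + p)) = lenAt (strip X) (p + 1)
      rw [hshift p, ihp]
      rfl
  -- Ufun agrees after shifting by K
  have hufun : ∀ p, Ufun (appH ρ X) (K + p) = Ufun X p := by
    intro p
    cases hg : (strip X).get? p with
    | none =>
      rw [Ufun_of_none (by rw [hshift p]; exact hg), Ufun_of_none hg]
    | some m =>
      rw [Ufun_of_get (by rw [hshift p]; exact hg : (strip (appH ρ X)).get? (K + p) = some m),
        Ufun_of_get hg, hlen p]
      congr 1
      apply propext
      constructor
      · rintro ⟨hc1, hc2⟩
        refine ⟨hc1, fun q m' hq hgq => ?_⟩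
        have h5 := hc2 (K + q) m' (by omega) (by rw [hshift q]; exact hgq)
        exact h5
      · rintro ⟨hc1, hc2⟩
        refine ⟨hc1, fun q m' hq hgq => ?_⟩
        have hqK : K ≤ q := by omega
        have h6 : (strip X).get? (q - K) = some m' := by
          rw [← hshift (q - K)]
          have h7 : K + (q - K) = q := by omega
          rw [h7]
          exact hgq
        exact hc2 (q - K) m' (by omega) h6
  -- Ufun is none on the first K cells
  have hnone : ∀ p < K, Ufun (appH ρ X) p = none := by
    intro p hp
    have hgp : (strip (appH ρ X)).get? p = some (ν.get ⟨p, hp⟩) := by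
      rw [hget p, dif_pos hp]
    rw [Ufun_of_get hgp, if_neg]
    rintro ⟨hc1, hc2⟩
    by_cases hlast : p = K - 1
    · subst hlast
      have : ν.get ⟨K - 1, by omega⟩ = 1 := by
        have := hgetlast
        rw [hget (K - 1), dif_pos (by omega)] at this
        injection this
      omega
    · have h5 := hc2 (K - 1) 1 (by omega) hgetlast
      rcases h5 with h5 | h5
      · omega
      · omega
  exact strip_none_pad K (Ufun (appH ρ X)) (Ufun X) hnone hufun

theorem continuous_appH (ρ : List Hat) : Continuous (fun X => appH ρ X) := by
  apply continuous_pi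
  intro n
  by_cases h : n < ρ.length
  · have h2 : (fun X => appH ρ X n) = fun _ => ρ.get ⟨n, h⟩ := by
      funext X; simp [appH, h]
    rw [h2]
    exact continuous_const
  · have h2 : (fun X => appH ρ X n) = fun X => X (n - ρ.length) := by
      funext X; simp [appH, h]
    rw [h2]
    exact continuous_apply _

theorem Ufun_initializable : InitializableH Ufun := by
  intro τ
  refine ⟨fun X => appH (τ ++ [some 1]) X, continuous_appH _, ?_, ?_⟩
  · intro X i
    show appH (τ ++ [some 1]) X i = τ.get i
    have hi : (i : ℕ) < (τ ++ [some 1]).length := by simp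
    rw [appH, dif_pos hi]
    rw [List.get_eq_getElem, List.get_eq_getElem, List.getElem_append_left]
  · intro X
    exact (restart_key τ X).symm

/-! #### Closed approximations to a `Σ⁰₂`-measurable function -/

/-- `PfxSet G σ` is the set of `X` such that `σ` is a prefix of `(G X)^p`. -/
def PfxSet (G : HatBaire → HatBaire) (σ : List ℕ) : Set HatBaire :=
  {X | ∀ (j : ℕ) (hj : j < σ.length), (strip (G X)).get? j = some (σ.get ⟨j, hj⟩)}

theorem Sig2_strip_comp_some {G : HatBaire → HatBaire} (hG : SigmaMeasurableH 2 G)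
    (j v : ℕ) : Sig2 {X | (strip (G X)).get? j = some v} := by
  classical
  have key : {X | (strip (G X)).get? j = some v} = ⋃ q : ℕ × List Hat,
      (if q.2.length = q.1 + 1 ∧ nthSome (appH q.2 (fun _ => none)) j = some q.1 ∧
          appH q.2 (fun _ => none) q.1 = some v
        then G ⁻¹' cylH q.2 else ∅) := by
    ext X
    simp only [Set.mem_setOf_eq, Set.mem_iUnion]
    constructor
    · intro h
      obtain ⟨i, hns, hGv⟩ := strip_get?_eq_some_iff.mp h
      refine ⟨(i, List.ofFn (fun k : Fin (i + 1) => G X k)), ?_⟩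
      have hlen : (List.ofFn (fun k : Fin (i + 1) => G X k)).length = i + 1 := by simp
      have hagree : ∀ k, k < i + 1 →
          appH (List.ofFn (fun k : Fin (i + 1) => G X k)) (fun _ => none) k = G X k := by
        intro k hk
        rw [appH, dif_pos (show k < _ by rw [hlen]; exact hk), List.get_ofFn]
        rfl
      rw [if_pos ⟨hlen, nthSome_determined (fun k hk => hagree k (by omega)) hns,
        by rw [hagree i (by omega)]; exact hGv⟩]
      intro k
      show G X (k : ℕ) = _
      rw [List.get_ofFn]
      rfl
    · rintro ⟨q, hq⟩
      by_cases hc : q.2.length = q.1 + 1 ∧ nthSome (appH q.2 (fun _ => none)) j = some q.1 ∧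
          appH q.2 (fun _ => none) q.1 = some v
      · rw [if_pos hc] at hq
        obtain ⟨hlen, hns, hvv⟩ := hc
        have hagree : ∀ k, k < q.1 + 1 → G X k = appH q.2 (fun _ => none) k := by
          intro k hk
          rw [appH, dif_pos (show k < q.2.length by omega)]
          exact hq ⟨k, by omega⟩
        refine strip_get?_eq_some_iff.mpr ⟨q.1, ?_, ?_⟩
        · exact nthSome_determined (fun k hk => hagree k (by omega)) hns
        · rw [hagree q.1 (by omega)]; exact hvv
      · rw [if_neg hc] at hq; exact absurd hq (Set.notMem_empty X)
  rw [key]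
  refine Sig2_iUnion_enc fun q => ?_
  by_cases hc : q.2.length = q.1 + 1 ∧ nthSome (appH q.2 (fun _ => none)) j = some q.1 ∧
      appH q.2 (fun _ => none) q.1 = some v
  · rw [if_pos hc]; exact hG q.2
  · rw [if_neg hc]; exact Sig2_empty

theorem Sig2_PfxSet {G : HatBaire → HatBaire} (hG : SigmaMeasurableH 2 G) (σ : List ℕ) :
    Sig2 (PfxSet G σ) := by
  have key : PfxSet G σ =
      ⋂ j : Fin σ.length, {X | (strip (G X)).get? j = some (σ.get j)} := by
    ext X
    simp only [PfxSet, Set.mem_setOf_eq, Set.mem_iInter]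
    constructor
    · intro h j; exact h j j.isLt
    · intro h j hj; exact h ⟨j, hj⟩
  rw [key]
  exact Sig2_iInter_fin _ fun j => Sig2_strip_comp_some hG (j : ℕ) _

theorem exists_closed_approx {G : HatBaire → HatBaire} (hG : SigmaMeasurableH 2 G) :
    ∃ C : List ℕ → ℕ → Set HatBaire,
      (∀ σ m, IsClosed (C σ m)) ∧
      (∀ σ m m', m ≤ m' → C σ m ⊆ C σ m') ∧
      (∀ σ (X : HatBaire), (∃ m, X ∈ C σ m) ↔ X ∈ PfxSet G σ) := by
  choose f hf1 hf2 using fun σ : List ℕ => sig2_iff.mp (Sig2_PfxSet hG σ)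
  refine ⟨fun σ m => ⋃ k ∈ Finset.range (m + 1), f σ k, ?_, ?_, ?_⟩
  · intro σ m
    exact Set.Finite.isClosed_biUnion (Finset.range (m + 1)).finite_toSet
      fun k _ => hf1 σ k
  · intro σ m m' hmm
    apply Set.iUnion₂_subset
    intro k hk
    apply Set.subset_iUnion₂_of_subset k (by simp at hk ⊢; omega)
    exact subset_rfl
  · intro σ X
    constructor
    · rintro ⟨m, hm⟩
      simp only [Set.mem_iUnion] at hm
      obtain ⟨k, _, hk⟩ := hm
      have h2 : X ∈ ⋃ n, f σ n := Set.mem_iUnion.mpr ⟨k, hk⟩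
      rw [← hf2 σ] at h2
      exact h2
    · intro h
      rw [hf2 σ] at h
      obtain ⟨k, hk⟩ := Set.mem_iUnion.mp h
      refine ⟨k, ?_⟩
      show X ∈ ⋃ k' ∈ Finset.range (k + 1), f σ k'
      exact Set.mem_iUnion.mpr ⟨k, Set.mem_iUnion.mpr ⟨by simp, hk⟩⟩

/-! #### The guessing strategy -/

section Strategy

variable (C : List ℕ → ℕ → Set HatBaire)

/-- Digit of a candidate code. -/
def dgt (c : ℕ) : ℕ := (Nat.unpair c).1

/-- Index of a candidate code. -/
def mdx (c : ℕ) : ℕ := (Nat.unpair c).2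

/-- `Alive C σ m n X`: the closed set `C σ m` is consistent with `X↾n`. -/
def Alive (σ : List ℕ) (m n : ℕ) (X : HatBaire) : Prop :=
  ∃ Y, Y ∈ C σ m ∧ ∀ i < n, Y i = X i

/-- Position `j` of the stack `s` is refuted at stage `n`. -/
def DeadAt (s : List ℕ) (n : ℕ) (X : HatBaire) (j : ℕ) : Prop :=
  ¬ Alive C ((s.take (j + 1)).map dgt) (mdx (s.getD j 0)) n X

/-- The stack of candidates at stage `n`. -/
def stk (X : HatBaire) : ℕ → List ℕ
  | 0 => []
  | n + 1 =>
    if h : ∃ j, j < (stk X n).length ∧ DeadAt C (stk X n) n X j then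
      (stk X n).take (Nat.find h) ++ [(stk X n).getD (Nat.find h) 0 + 1]
    else stk X n ++ [0]

theorem stk_zero (X : HatBaire) : stk C X 0 = [] := rfl

theorem stk_succ_def (X : HatBaire) (n : ℕ) :
    stk C X (n + 1) =
      if h : ∃ j, j < (stk C X n).length ∧ DeadAt C (stk C X n) n X j then
        (stk C X n).take (Nat.find h) ++ [(stk C X n).getD (Nat.find h) 0 + 1]
      else stk C X n ++ [0] := rfl

/-- The trunc value emitted at stage `n`. -/
def TT (X : HatBaire) (n : ℕ) : ℕ := (stk C X (n + 1)).length - 1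

/-- The move emitted at global time `n`. -/
def mvθ (X : HatBaire) (n : ℕ) : ℕ :=
  if n % 2 = 0 then 2 * TT C X (n / 2) + 1
  else 2 * dgt ((stk C X (n / 2 + 1)).getD (TT C X (n / 2)) 0)

/-- The continuous reduction. -/
def θF (X : HatBaire) : HatBaire := fun n => some (mvθ C X n)

/-- Case analysis on one step of the stack dynamics. -/
theorem stk_succ_cases (X : HatBaire) (n : ℕ) :
    (∃ j, j < (stk C X n).length ∧ DeadAt C (stk C X n) n X j ∧
      (∀ j' < j, ¬ DeadAt C (stk C X n) n X j') ∧
      stk C X (n + 1) = (stk C X n).take j ++ [(stk C X n).getD j 0 + 1] ∧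
      TT C X n = j) ∨
    ((∀ j < (stk C X n).length, ¬ DeadAt C (stk C X n) n X j) ∧
      stk C X (n + 1) = stk C X n ++ [0] ∧ TT C X n = (stk C X n).length) := by
  classical
  by_cases h : ∃ j, j < (stk C X n).length ∧ DeadAt C (stk C X n) n X j
  · left
    refine ⟨Nat.find h, (Nat.find_spec h).1, (Nat.find_spec h).2, ?_, ?_, ?_⟩
    · intro j' hj'
      intro hd
      have hspec := (Nat.find_spec h).1
      exact (Nat.find_min h hj') ⟨by omega, hd⟩
    · rw [stk_succ_def, dif_pos h]
    · have hlen : (stk C X (n + 1)).length = Nat.find h + 1 := by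
        rw [stk_succ_def, dif_pos h]
        simp only [List.length_append, List.length_take, List.length_cons,
          List.length_nil]
        have := (Nat.find_spec h).1
        omega
      rw [TT, hlen]
      omega
  · right
    refine ⟨fun j hj hd => h ⟨j, hj, hd⟩, ?_, ?_⟩
    · rw [stk_succ_def, dif_neg h]
    · have hlen : (stk C X (n + 1)).length = (stk C X n).length + 1 := by
        rw [stk_succ_def, dif_neg h]; simp
      rw [TT, hlen]
      omega

theorem stk_len_succ (X : HatBaire) (n : ℕ) :
    (stk C X (n + 1)).length = TT C X n + 1 := by
  rcases stk_succ_cases C X n with ⟨j, hj, _, _, he, ht⟩ | ⟨_, he, ht⟩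
  · rw [he, ht]
    simp only [List.length_append, List.length_take, List.length_cons, List.length_nil]
    omega
  · rw [he, ht]; simp

theorem TT_le_len (X : HatBaire) (n : ℕ) : TT C X n ≤ (stk C X n).length := by
  rcases stk_succ_cases C X n with ⟨j, hj, _, _, _, ht⟩ | ⟨_, _, ht⟩ <;> omega

/-- Prefix stability under one step. -/
theorem prefix_stable_step (X : HatBaire) {n j : ℕ} (h : j + 1 ≤ TT C X n) :
    (stk C X (n + 1)).take (j + 1) = (stk C X n).take (j + 1) := by
  rcases stk_succ_cases C X n with ⟨j', hj', _, _, he, ht⟩ | ⟨_, he, ht⟩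
  · rw [he]
    have h1 : j + 1 ≤ ((stk C X n).take j').length := by
      rw [List.length_take]; omega
    rw [List.take_append_of_le_length h1, List.take_take]
    congr 1
    omega
  · rw [he]
    have h1 : j + 1 ≤ (stk C X n).length := by omega
    rw [List.take_append_of_le_length h1]

theorem prefix_stable (X : HatBaire) {a b j : ℕ} (hab : a ≤ b)
    (h : ∀ m, a ≤ m → m < b → j + 1 ≤ TT C X m) :
    (stk C X b).take (j + 1) = (stk C X a).take (j + 1) := by
  induction b with
  | zero =>
    obtain rfl : a = 0 := by omega
    rfl
  | succ b ih =>
    rcases Nat.lt_succ_iff_lt_or_eq.mp (Nat.lt_succ_of_le hab) with hb | hb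
    · rw [prefix_stable_step C X (h b (by omega) (by omega))]
      exact ih (by omega) fun m h1 h2 => h m h1 (by omega)
    · subst hb; rfl

/-- Crossing lemma: between a stage with short stack and a stage with long stack there is
a stage emitting trunc value exactly `j`. -/
theorem len_reach (X : HatBaire) {a b j : ℕ} (hab : a ≤ b)
    (ha : (stk C X a).length ≤ j) (hb : j + 1 ≤ (stk C X b).length) :
    ∃ m, a ≤ m ∧ m < b ∧ TT C X m = j := by
  induction b with
  | zero =>
    obtain rfl : a = 0 := by omega
    omega
  | succ b ih =>
    have hab' : a ≤ b := by
      rcases Nat.lt_succ_iff_lt_or_eq.mp (Nat.lt_succ_of_le hab) with hb' | hb'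
      · omega
      · exfalso; subst hb'; omega
    by_cases hlb : (stk C X b).length ≤ j
    · have h1 : (stk C X (b + 1)).length = TT C X b + 1 := stk_len_succ C X b
      have h2 : TT C X b ≤ (stk C X b).length := TT_le_len C X b
      exact ⟨b, hab', by omega, by omega⟩
    · obtain ⟨m, h1, h2, h3⟩ := ih hab' (by omega)
      exact ⟨m, h1, by omega, h3⟩

theorem alive_congr {X X' : HatBaire} {σ : List ℕ} {mm m : ℕ}
    (h : ∀ i < m, X i = X' i) : Alive C σ mm m X ↔ Alive C σ mm m X' := by
  constructor
  · rintro ⟨Y, h1, h2⟩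
    exact ⟨Y, h1, fun i hi => (h2 i hi).trans (h i hi)⟩
  · rintro ⟨Y, h1, h2⟩
    exact ⟨Y, h1, fun i hi => (h2 i hi).trans (h i hi).symm⟩

theorem stk_congr {X X' : HatBaire} : ∀ m, (∀ i < m, X i = X' i) →
    stk C X m = stk C X' m := by
  intro m
  induction m with
  | zero => intro _; rfl
  | succ m ih =>
    intro h
    have hs : stk C X m = stk C X' m := ih fun i hi => h i (by omega)
    have hdead : ∀ j, DeadAt C (stk C X m) m X j ↔ DeadAt C (stk C X' m) m X' j := by
      intro j
      rw [hs]
      exact not_congr (alive_congr C fun i hi => h i (by omega))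
    rcases stk_succ_cases C X m with ⟨j, hj, hd, hmin, heq, _⟩ | ⟨hno, heq, _⟩
    · rcases stk_succ_cases C X' m with ⟨j', hj', hd', hmin', heq', _⟩ | ⟨hno', heq', _⟩
      · have hjj : j = j' := by
          by_contra hne
          rcases Nat.lt_or_ge j j' with hlt | hge
          · exact hmin' j hlt ((hdead j).mp hd)
          · exact hmin j' (by omega) ((hdead j').mpr hd')
        subst hjj
        rw [heq, heq', hs]
      · exact absurd ((hdead j).mp hd) (hno' j (by rw [← hs]; exact hj))
    · rcases stk_succ_cases C X' m with ⟨j', hj', hd', hmin', heq', _⟩ | ⟨hno', heq', _⟩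
      · exact absurd ((hdead j').mpr hd') (hno j' (by rw [hs]; exact hj'))
      · rw [heq, heq', hs]

theorem continuous_θF : Continuous (θF C) := by
  apply continuous_pi
  intro k
  apply continuous_of_determined (k / 2 + 2)
  intro X Y h
  have h1 : stk C X (k / 2 + 1) = stk C Y (k / 2 + 1) :=
    stk_congr C (k / 2 + 1) fun i hi => h i (by omega)
  show (some (mvθ C X k) : Hat) = some (mvθ C Y k)
  unfold mvθ TT
  rw [h1]

theorem alive_mono {σ : List ℕ} {m n n' : ℕ} {X : HatBaire} (h : n ≤ n')
    (ha : Alive C σ m n' X) : Alive C σ m n X := by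
  obtain ⟨Y, h1, h2⟩ := ha
  exact ⟨Y, h1, fun i hi => h2 i (by omega)⟩

theorem alive_of_mem {σ : List ℕ} {m : ℕ} {X : HatBaire} (h : X ∈ C σ m) (n : ℕ) :
    Alive C σ m n X := ⟨X, h, fun _ _ => rfl⟩

theorem mem_of_alive (hcl : ∀ σ m, IsClosed (C σ m)) {σ : List ℕ} {m : ℕ} {X : HatBaire}
    (h : ∀ n, Alive C σ m n X) : X ∈ C σ m := by
  by_contra hc
  obtain ⟨n, hn⟩ := exists_prefix_of_isOpen (hcl σ m).isOpen_compl hc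
  obtain ⟨Y, h1, h2⟩ := h n
  exact hn Y (fun i hi => h2 i hi) h1

/-- The inductive invariant: from stage `N` on, the first `j` candidates are `σc` and no
truncation goes below `j`. -/
def InvAt (X : HatBaire) (j N : ℕ) (σc : List ℕ) : Prop :=
  σc.length = j ∧
    ∀ n, N ≤ n → j ≤ (stk C X n).length ∧ j ≤ TT C X n ∧ (stk C X n).take j = σc

theorem len_ge {X : HatBaire} {j N : ℕ} {σc : List ℕ} (hinv : InvAt C X j N σc) {n : ℕ}
    (hn : N + 1 ≤ n) : j + 1 ≤ (stk C X n).length := by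
  obtain ⟨m, rfl⟩ : ∃ m, n = m + 1 := ⟨n - 1, by omega⟩
  rw [stk_len_succ]
  have h2 := (hinv.2 m (by omega)).2.1
  omega

theorem list_take_succ_eq {l : List ℕ} {j : ℕ} (hj : j < l.length) :
    l.take (j + 1) = l.take j ++ [l.getD j 0] := by
  rw [List.take_succ, List.getElem?_eq_getElem hj, List.getD_eq_getElem l 0 hj]
  rfl

theorem getD_concat (l : List ℕ) (c : ℕ) : (l ++ [c]).getD l.length 0 = c := by
  rw [List.getD_eq_getElem _ 0 (by simp)]
  exact List.getElem_concat_length (l := l) (a := c) rfl (by simp)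

theorem getD_append_lt (l l' : List ℕ) {j : ℕ} (hj : j < l.length) :
    (l ++ l').getD j 0 = l.getD j 0 := by
  rw [List.getD_eq_getElem _ 0 (by simp; omega), List.getD_eq_getElem _ 0 hj]
  exact List.getElem_append_left hj

theorem getD_take_eq (s : List ℕ) {j j' : ℕ} (hj : j < j') (hlen : j' ≤ s.length) :
    (s.take j').getD j 0 = s.getD j 0 := by
  have h1 : j < (s.take j').length := by rw [List.length_take]; omega
  rw [List.getD_eq_getElem _ 0 h1, List.getD_eq_getElem _ 0 (by omega), List.getElem_take]

/-- Candidate evolution at position `j`, assuming the invariant below `j`. -/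
theorem step_at {X : HatBaire} {j N : ℕ} {σc : List ℕ} (hinv : InvAt C X j N σc) {n : ℕ}
    (hn : N + 1 ≤ n) :
    ((stk C X (n + 1)).getD j 0 = (stk C X n).getD j 0 ∧ TT C X n ≠ j) ∨
    ((stk C X (n + 1)).getD j 0 = (stk C X n).getD j 0 + 1 ∧ TT C X n = j ∧
      ¬ Alive C (σc.map dgt ++ [dgt ((stk C X n).getD j 0)])
        (mdx ((stk C X n).getD j 0)) n X) := by
  have hjlen : j < (stk C X n).length := by
    have := len_ge C hinv hn; omega
  have hTTj : j ≤ TT C X n := (hinv.2 n (by omega)).2.1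
  have htake : (stk C X n).take j = σc := (hinv.2 n (by omega)).2.2
  rcases stk_succ_cases C X n with ⟨j', hj', hd, hmin, heq, hTT⟩ | ⟨hno, heq, hTT⟩
  · by_cases hcase : j' = j
    · subst hcase
      right
      have hlt : ((stk C X n).take j').length = j' := by
        rw [List.length_take]; omega
      refine ⟨?_, hTT, ?_⟩
      · rw [heq]
        have h9 : (((stk C X n).take j') ++ [(stk C X n).getD j' 0 + 1]).getD j' 0
            = (stk C X n).getD j' 0 + 1 := by
          have := getD_concat ((stk C X n).take j') ((stk C X n).getD j' 0 + 1)
          rwa [hlt] at this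
        exact h9
      · have hd' : ¬ Alive C (((stk C X n).take (j' + 1)).map dgt)
            (mdx ((stk C X n).getD j' 0)) n X := hd
        rwa [list_take_succ_eq hjlen, htake, List.map_append] at hd'
    · left
      have hjj' : j < j' := by omega
      refine ⟨?_, by omega⟩
      rw [heq]
      have h1 : j < ((stk C X n).take j').length := by
        rw [List.length_take]; omega
      rw [getD_append_lt _ _ h1, getD_take_eq _ hjj' (by omega)]
  · left
    refine ⟨?_, by omega⟩
    rw [heq, getD_append_lt _ _ hjlen]

theorem cand_mono {X : HatBaire} {j N : ℕ} {σc : List ℕ} (hinv : InvAt C X j N σc)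
    {a b : ℕ} (ha : N + 1 ≤ a) (hab : a ≤ b) :
    (stk C X a).getD j 0 ≤ (stk C X b).getD j 0 := by
  induction b with
  | zero =>
    obtain rfl : a = 0 := by omega
    exact le_rfl
  | succ b ih =>
    rcases Nat.lt_succ_iff_lt_or_eq.mp (Nat.lt_succ_of_le hab) with hb | hb
    · have h1 := ih (by omega)
      rcases step_at C hinv (show N + 1 ≤ b by omega) with ⟨h2, _⟩ | ⟨h2, _, _⟩ <;> omega
    · subst hb; exact le_rfl

theorem cand_step_le {X : HatBaire} {j N : ℕ} {σc : List ℕ} (hinv : InvAt C X j N σc)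
    {n : ℕ} (hn : N + 1 ≤ n) :
    (stk C X (n + 1)).getD j 0 ≤ (stk C X n).getD j 0 + 1 := by
  rcases step_at C hinv hn with ⟨h2, _⟩ | ⟨h2, _, _⟩ <;> omega

/-- If no truncation at `j` ever happens after some point, the candidate at `j` settles and
its closed set contains `X`. -/
theorem eventually_settles (hcl : ∀ σ m, IsClosed (C σ m)) {X : HatBaire} {j N : ℕ}
    {σc : List ℕ} (hinv : InvAt C X j N σc)
    (hstop : ∃ n₂, N + 1 ≤ n₂ ∧ ∀ n, n₂ ≤ n → TT C X n ≠ j) :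
    ∃ n₂ c, N + 1 ≤ n₂ ∧ X ∈ C (σc.map dgt ++ [dgt c]) (mdx c) ∧
      ∀ n, n₂ ≤ n → (stk C X n).take (j + 1) = σc ++ [c] ∧ j + 1 ≤ TT C X n ∧
        j + 1 ≤ (stk C X n).length := by
  obtain ⟨n₂, hn₂, hTT⟩ := hstop
  set c := (stk C X n₂).getD j 0 with hc
  have hconst : ∀ n, n₂ ≤ n → (stk C X n).getD j 0 = c := by
    intro n hn
    induction n with
    | zero =>
      obtain rfl : n₂ = 0 := by omega
      rfl
    | succ n ih =>
      rcases Nat.lt_succ_iff_lt_or_eq.mp (Nat.lt_succ_of_le hn) with h | h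
      · have h1 := ih (by omega)
        rcases step_at C hinv (show N + 1 ≤ n by omega) with ⟨h2, _⟩ | ⟨_, h3, _⟩
        · omega
        · exact absurd h3 (hTT n (by omega))
      · subst h; rfl
  have halive : ∀ n, n₂ ≤ n → Alive C (σc.map dgt ++ [dgt c]) (mdx c) n X := by
    intro n hn
    have hjlen : j < (stk C X n).length := by
      have := len_ge C hinv (show N + 1 ≤ n by omega); omega
    have htake : (stk C X n).take j = σc := (hinv.2 n (by omega)).2.2
    have hTTn : j ≤ TT C X n := (hinv.2 n (by omega)).2.1
    by_contra hna
    -- then position j is dead at stage n, forcing a truncation at ≤ j, hence at j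
    have hdead : DeadAt C (stk C X n) n X j := by
      show ¬ Alive C (((stk C X n).take (j + 1)).map dgt) (mdx ((stk C X n).getD j 0)) n X
      rw [list_take_succ_eq hjlen, htake, List.map_append, hconst n hn]
      exact hna
    rcases stk_succ_cases C X n with ⟨j', hj', hd', hmin, _, hTT'⟩ | ⟨hno, _, _⟩
    · have hj'j : j ≤ j' := by omega
      have : j' = j := by
        by_contra hne
        exact hmin j (by omega) hdead
      exact hTT n hn (by omega)
    · exact hno j hjlen hdead
  refine ⟨n₂, c, hn₂, ?_, ?_⟩
  · apply mem_of_alive C hcl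
    intro n
    by_cases hn : n₂ ≤ n
    · exact halive n hn
    · exact alive_mono C (show n ≤ n₂ by omega) (halive n₂ le_rfl)
  · intro n hn
    have hjlen : j < (stk C X n).length := by
      have := len_ge C hinv (show N + 1 ≤ n by omega); omega
    have htake : (stk C X n).take j = σc := (hinv.2 n (by omega)).2.2
    have hTTn : j ≤ TT C X n := (hinv.2 n (by omega)).2.1
    refine ⟨?_, ?_, by omega⟩
    · rw [list_take_succ_eq hjlen, htake, hconst n hn]
    · have := hTT n hn; omega

/-- If truncations at `j` recur forever, every candidate at `j` eventually dies. -/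
theorem increments_forever (hcl : ∀ σ m, IsClosed (C σ m)) {X : HatBaire} {j N : ℕ}
    {σc : List ℕ} (hinv : InvAt C X j N σc)
    (hinf : ∀ n₂, N + 1 ≤ n₂ → ∃ n, n₂ ≤ n ∧ TT C X n = j) :
    ∀ c, (stk C X (N + 1)).getD j 0 ≤ c → X ∉ C (σc.map dgt ++ [dgt c]) (mdx c) := by
  have hkill : ∀ n, N + 1 ≤ n → TT C X n = j →
      ((stk C X (n + 1)).getD j 0 = (stk C X n).getD j 0 + 1 ∧
        X ∉ C (σc.map dgt ++ [dgt ((stk C X n).getD j 0)]) (mdx ((stk C X n).getD j 0))) := by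
    intro n hn hTTn
    rcases step_at C hinv hn with ⟨_, h2⟩ | ⟨h1, _, h3⟩
    · exact absurd hTTn h2
    · refine ⟨h1, fun hmem => h3 (alive_of_mem C hmem n)⟩
  have hunbounded : ∀ b, ∃ n, N + 1 ≤ n ∧ b ≤ (stk C X n).getD j 0 := by
    intro b
    induction b with
    | zero => exact ⟨N + 1, le_rfl, by omega⟩
    | succ b ih =>
      obtain ⟨n, hn1, hn2⟩ := ih
      obtain ⟨n', hn'1, hn'2⟩ := hinf n hn1
      have h4 := cand_mono C hinv hn1 hn'1
      have h5 := (hkill n' (by omega) hn'2).1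
      exact ⟨n' + 1, by omega, by omega⟩
  intro c hc
  -- find the stage where candidate value c is incremented
  have hex : ∃ d, c + 1 ≤ (stk C X (N + 1 + d)).getD j 0 := by
    obtain ⟨n, hn1, hn2⟩ := hunbounded (c + 1)
    exact ⟨n - (N + 1), by
      have h6 : N + 1 + (n - (N + 1)) = n := by omega
      rw [h6]; exact hn2⟩
  classical
  set d := Nat.find hex with hd
  have hspec : c + 1 ≤ (stk C X (N + 1 + d)).getD j 0 := Nat.find_spec hex
  have hdpos : d ≠ 0 := by
    intro h0
    rw [h0] at hspec
    simp only [Nat.add_zero] at hspec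
    omega
  have hprev : ¬ c + 1 ≤ (stk C X (N + 1 + (d - 1))).getD j 0 :=
    Nat.find_min hex (by omega)
  have hstep := cand_step_le C hinv (show N + 1 ≤ N + 1 + (d - 1) by omega)
  have heq1 : N + 1 + (d - 1) + 1 = N + 1 + d := by omega
  rw [heq1] at hstep
  have hval : (stk C X (N + 1 + (d - 1))).getD j 0 = c := by omega
  -- at stage N+1+(d-1) the candidate is incremented, so it was dead
  have hTTd : TT C X (N + 1 + (d - 1)) = j := by
    rcases step_at C hinv (show N + 1 ≤ N + 1 + (d - 1) by omega) with ⟨h2, _⟩ | ⟨_, h3, _⟩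
    · rw [heq1] at h2; omega
    · exact h3
  have h7 := (hkill (N + 1 + (d - 1)) (by omega) hTTd).2
  rwa [hval] at h7

variable (G : HatBaire → HatBaire)

/-- The main induction: along correct prefixes of `(G X)^p` the stack stabilizes. -/
theorem inv_all (hcl : ∀ σ m, IsClosed (C σ m))
    (hmono : ∀ σ m m', m ≤ m' → C σ m ⊆ C σ m')
    (hun : ∀ σ (Z : HatBaire), (∃ m, Z ∈ C σ m) ↔ Z ∈ PfxSet G σ) (X : HatBaire) :
    ∀ j, (∀ k, k < j → ((strip (G X)).get? k).isSome) →
      ∃ N σc, InvAt C X j N σc ∧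
        ∀ k, k < j → (strip (G X)).get? k = some (dgt (σc.getD k 0)) := by
  intro j
  induction j with
  | zero =>
    intro _
    exact ⟨0, [], ⟨rfl, fun n _ => ⟨by omega, by omega, List.take_zero⟩⟩,
      fun k hk => absurd hk (by omega)⟩
  | succ j ih =>
    intro hGood
    obtain ⟨N, σc, hinv, hdig⟩ := ih fun k hk => hGood k (by omega)
    have hGj := hGood j (by omega)
    obtain ⟨vj, hvj⟩ : ∃ vj, (strip (G X)).get? j = some vj := by
      cases hh : (strip (G X)).get? j with
      | none => rw [hh] at hGj; simp at hGj
      | some v => exact ⟨v, rfl⟩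
    have hσlen : (σc.map dgt).length = j := by rw [List.length_map]; exact hinv.1
    have hσc : σc.length = j := hinv.1
    by_cases hstop : ∃ n₂, N + 1 ≤ n₂ ∧ ∀ n, n₂ ≤ n → TT C X n ≠ j
    · obtain ⟨n₂, c, hn₂, hmem, hstable⟩ := eventually_settles C hcl hinv hstop
      have hpfx : X ∈ PfxSet G (σc.map dgt ++ [dgt c]) := (hun _ X).mp ⟨mdx c, hmem⟩
      have hgetj : (strip (G X)).get? j = some (dgt c) := by
        have h1 := hpfx j (by simp [hσlen])
        have h2 : (σc.map dgt ++ [dgt c]).get ⟨j, by simp [hσlen]⟩ = dgt c := by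
          rw [List.get_eq_getElem]
          exact List.getElem_concat_length hσlen.symm (by simp [hσlen])
        rwa [h2] at h1
      refine ⟨n₂, σc ++ [c], ⟨by simp [hinv.1], fun n hn => ?_⟩, ?_⟩
      · obtain ⟨h1, h2, h3⟩ := hstable n hn
        exact ⟨h3, h2, h1⟩
      · intro k hk
        rcases Nat.lt_succ_iff_lt_or_eq.mp hk with hkj | hkj
        · rw [getD_append_lt σc [c] (by omega)]
          exact hdig k hkj
        · subst hkj
          have h2 : (σc ++ [c]).getD k 0 = c := by
            have h3 := getD_concat σc c
            rwa [hinv.1] at h3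
          rw [h2]
          exact hgetj
    · exfalso
      push_neg at hstop
      have hinf : ∀ n₂, N + 1 ≤ n₂ → ∃ n, n₂ ≤ n ∧ TT C X n = j := by
        intro n₂ hn₂
        obtain ⟨n, hn1, hn2⟩ := hstop n₂ hn₂
        exact ⟨n, hn1, by tauto⟩
      have hnotin := increments_forever C hcl hinv hinf
      have hpfx : X ∈ PfxSet G (σc.map dgt ++ [vj]) := by
        intro k hk
        have hklen : k < j + 1 := by simpa [hσlen] using hk
        rcases Nat.lt_succ_iff_lt_or_eq.mp hklen with hkj | hkj
        · have h2 : (σc.map dgt ++ [vj]).get ⟨k, hk⟩ = dgt (σc.getD k 0) := by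
            rw [List.get_eq_getElem,
              List.getElem_append_left (show k < (σc.map dgt).length by omega),
              List.getElem_map, List.getD_eq_getElem σc 0 (by omega)]
          rw [h2]
          exact hdig k hkj
        · subst hkj
          have h2 : (σc.map dgt ++ [vj]).get ⟨k, hk⟩ = vj := by
            rw [List.get_eq_getElem]
            exact List.getElem_concat_length hσlen.symm (by simp [hσlen])
          rw [h2]
          exact hvj
      obtain ⟨m0, hm0⟩ := (hun _ X).mpr hpfx
      set c0 := (stk C X (N + 1)).getD j 0 with hc0
      set c := Nat.pair vj (max m0 c0) with hcc
      have hdgt : dgt c = vj := by simp [dgt, hcc, Nat.unpair_pair]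
      have hmdx : mdx c = max m0 c0 := by simp [mdx, hcc, Nat.unpair_pair]
      have hcge : c0 ≤ c := by
        have h1 := Nat.right_le_pair vj (max m0 c0)
        have h2 : c0 ≤ max m0 c0 := le_max_right _ _
        omega
      have hmem : X ∈ C (σc.map dgt ++ [dgt c]) (mdx c) := by
        rw [hdgt, hmdx]
        exact hmono _ m0 (max m0 c0) (le_max_left _ _) hm0
      exact hnotin c hcge hmem

theorem divergence (hcl : ∀ σ m, IsClosed (C σ m))
    (hmono : ∀ σ m m', m ≤ m' → C σ m ⊆ C σ m')
    (hun : ∀ σ (Z : HatBaire), (∃ m, Z ∈ C σ m) ↔ Z ∈ PfxSet G σ) (X : HatBaire)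
    {j : ℕ} (hGood : ∀ k, k < j → ((strip (G X)).get? k).isSome)
    (hbad : ¬ ((strip (G X)).get? j).isSome) :
    ∀ n₀, ∃ n, n₀ ≤ n ∧ TT C X n = j := by
  obtain ⟨N, σc, hinv, hdig⟩ := inv_all C G hcl hmono hun X j hGood
  intro n₀
  by_contra hc
  push_neg at hc
  have hstop : ∃ n₂, N + 1 ≤ n₂ ∧ ∀ n, n₂ ≤ n → TT C X n ≠ j := by
    refine ⟨max n₀ (N + 1), le_max_right _ _, fun n hn => ?_⟩
    exact hc n (le_trans (le_max_left _ _) hn)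
  obtain ⟨n₂, c, hn₂, hmem, _⟩ := eventually_settles C hcl hinv hstop
  have hpfx : X ∈ PfxSet G (σc.map dgt ++ [dgt c]) := (hun _ X).mp ⟨mdx c, hmem⟩
  have hσlen : (σc.map dgt).length = j := by rw [List.length_map]; exact hinv.1
  have h1 := hpfx j (by simp [hσlen])
  rw [h1] at hbad
  simp at hbad

/-- Existence and properties of the last stage truncating at `j`, for `j` inside `(G X)^p`. -/
theorem surv_exists (hcl : ∀ σ m, IsClosed (C σ m))
    (hmono : ∀ σ m m', m ≤ m' → C σ m ⊆ C σ m')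
    (hun : ∀ σ (Z : HatBaire), (∃ m, Z ∈ C σ m) ↔ Z ∈ PfxSet G σ) (X : HatBaire)
    (j : ℕ) (hGood : ∀ k, k ≤ j → ((strip (G X)).get? k).isSome) :
    ∃ nj, TT C X nj = j ∧ (∀ n', nj < n' → j < TT C X n') ∧
      (strip (G X)).get? j = some (dgt ((stk C X (nj + 1)).getD j 0)) := by
  obtain ⟨N, σc, hinv, hdig⟩ := inv_all C G hcl hmono hun X (j + 1)
    (fun k hk => hGood k (by omega))
  have hTTN : ∀ n, N ≤ n → j + 1 ≤ TT C X n := fun n hn => (hinv.2 n hn).2.1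
  have hlenN : ∀ n, N ≤ n → j + 1 ≤ (stk C X n).length := fun n hn => (hinv.2 n hn).1
  have hex : ∃ m, m ≤ N ∧ TT C X m = j := by
    obtain ⟨m, h1, h2, h3⟩ := len_reach C X (show (0:ℕ) ≤ N by omega)
      (by rw [stk_zero]; simp) (hlenN N le_rfl)
    exact ⟨m, by omega, h3⟩
  classical
  obtain ⟨m0, hm0N, hm0⟩ := hex
  set nj := Nat.findGreatest (fun n => TT C X n = j) N with hnj
  have hspec : TT C X nj = j := Nat.findGreatest_spec (P := fun n => TT C X n = j) hm0N hm0
  have hgt : ∀ n', nj < n' → TT C X n' ≠ j := by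
    intro n' hn'
    by_cases hn'N : n' ≤ N
    · exact Nat.findGreatest_is_greatest (P := fun n => TT C X n = j) hn' hn'N
    · have := hTTN n' (by omega)
      omega
  have hstrict : ∀ n', nj < n' → j < TT C X n' := by
    intro n' hn'
    by_contra hle
    have hlt : TT C X n' < j := by
      have := hgt n' hn'
      omega
    have hlen' : (stk C X (n' + 1)).length ≤ j := by
      rw [stk_len_succ]; omega
    by_cases hcmp : N ≤ n' + 1
    · have := hlenN (n' + 1) hcmp
      omega
    · obtain ⟨m, h1, h2, h3⟩ := len_reach C X (show n' + 1 ≤ N by omega) hlen'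
        (hlenN N le_rfl)
      exact hgt m (by omega) h3
  refine ⟨nj, hspec, hstrict, ?_⟩
  have hb : nj + 1 ≤ max (nj + 1) N := le_max_left _ _
  have htake : (stk C X (max (nj + 1) N)).take (j + 1) = (stk C X (nj + 1)).take (j + 1) :=
    prefix_stable C X hb fun m h1 h2 => hstrict m (by omega)
  have htakeσ : (stk C X (max (nj + 1) N)).take (j + 1) = σc :=
    (hinv.2 _ (le_max_right _ _)).2.2
  have hlen1 : j < (stk C X (nj + 1)).length := by
    rw [stk_len_succ]; omega
  have hgetD : (stk C X (nj + 1)).getD j 0 = σc.getD j 0 := by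
    have h5 : ((stk C X (nj + 1)).take (j + 1)).getD j 0 = (stk C X (nj + 1)).getD j 0 :=
      getD_take_eq _ (by omega) (by omega)
    rw [← h5, ← htake, htakeσ]
  rw [hgetD]
  exact hdig j (by omega)

/-! #### The output of `Ufun` along the strategy -/

theorem cnt_θF (X : HatBaire) (i : ℕ) : cnt (θF C X) i = i := by
  induction i with
  | zero => exact cnt_zero _
  | succ i ih =>
    rw [cnt_succ_of_isSome (by simp [θF]), ih]

theorem θF_strip_get? (X : HatBaire) (p : ℕ) :
    (strip (θF C X)).get? p = some (mvθ C X p) := by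
  have h1 : nthSome (θF C X) p = some p :=
    nthSome_eq_some_iff.mpr ⟨by simp [θF], cnt_θF C X p⟩
  rw [strip_get?, h1]
  rfl

theorem mv_even (X : HatBaire) (n : ℕ) : mvθ C X (2 * n) = 2 * TT C X n + 1 := by
  unfold mvθ
  rw [if_pos (by omega : 2 * n % 2 = 0), show 2 * n / 2 = n by omega]

theorem mv_odd (X : HatBaire) (n : ℕ) :
    mvθ C X (2 * n + 1) = 2 * dgt ((stk C X (n + 1)).getD (TT C X n) 0) := by
  unfold mvθ
  rw [if_neg (by omega)]
  have h1 : (2 * n + 1) / 2 = n := by omega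
  rw [h1]

theorem lenAt_succ' (s : Stream'.Seq ℕ) (k : ℕ) :
    lenAt s (k + 1) = match s.get? k with
      | some m => stepLen (lenAt s k) m
      | none => lenAt s k := rfl

theorem lenAt_θF (X : HatBaire) : ∀ n,
    lenAt (strip (θF C X)) (2 * n) = (stk C X n).length ∧
    lenAt (strip (θF C X)) (2 * n + 1) = TT C X n := by
  intro n
  induction n with
  | zero =>
    constructor
    · rw [show 2 * 0 = 0 by omega]
      rfl
    · have hT0 : TT C X 0 = 0 := by
        have h1 := stk_len_succ C X 0
        have h2 := TT_le_len C X 0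
        rw [stk_zero] at h2
        simp at h2
        exact h2
      have hm : mvθ C X 0 = 2 * TT C X 0 + 1 := by
        have h0 := mv_even C X 0
        rw [show 2 * 0 = 0 by omega] at h0
        exact h0
      rw [show 2 * 0 + 1 = 0 + 1 by omega, lenAt_succ', θF_strip_get?, hm, hT0]
      rfl
  | succ n ih =>
    obtain ⟨ih1, ih2⟩ := ih
    have e1 : lenAt (strip (θF C X)) (2 * (n + 1)) = TT C X n + 1 := by
      rw [show 2 * (n + 1) = (2 * n + 1) + 1 by omega, lenAt_succ', θF_strip_get?, mv_odd]
      show stepLen (lenAt (strip (θF C X)) (2 * n + 1)) _ = TT C X n + 1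
      rw [ih2, stepLen, if_pos (by omega)]
    constructor
    · rw [e1, stk_len_succ]
    · rw [show 2 * (n + 1) + 1 = (2 * (n + 1)) + 1 by omega, lenAt_succ', θF_strip_get?,
        show 2 * (n + 1) = 2 * (n + 1) from rfl, mv_even]
      show stepLen (lenAt (strip (θF C X)) (2 * (n + 1))) (2 * TT C X (n + 1) + 1)
        = TT C X (n + 1)
      rw [e1, stepLen, if_neg (by omega)]
      have h2 := TT_le_len C X (n + 1)
      rw [stk_len_succ] at h2
      have h3 : (2 * TT C X (n + 1) + 1) / 2 = TT C X (n + 1) := by omega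
      rw [h3]
      omega

theorem W_even (X : HatBaire) (n : ℕ) : Ufun (θF C X) (2 * n) = none := by
  rw [Ufun_of_get (by rw [θF_strip_get?, mv_even]), if_neg]
  rintro ⟨h1, _⟩
  omega

theorem W_odd (X : HatBaire) (n : ℕ) :
    Ufun (θF C X) (2 * n + 1) =
      if ∀ n', n < n' → TT C X n < TT C X n'
      then some (dgt ((stk C X (n + 1)).getD (TT C X n) 0)) else none := by
  rw [Ufun_of_get (by rw [θF_strip_get?, mv_odd])]
  by_cases hs : ∀ n', n < n' → TT C X n < TT C X n'
  · have hcond : (2 * dgt ((stk C X (n + 1)).getD (TT C X n) 0)) % 2 = 0 ∧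
        ∀ q m', 2 * n + 1 < q → (strip (θF C X)).get? q = some m' →
          m' % 2 = 0 ∨ lenAt (strip (θF C X)) (2 * n + 1) < m' / 2 := by
      refine ⟨by omega, fun q m' hq hgq => ?_⟩
      rw [θF_strip_get?] at hgq
      have hm' : m' = mvθ C X q := by injection hgq; omega
      subst hm'
      by_cases hq2 : q % 2 = 0
      · obtain ⟨n', rfl⟩ : ∃ n', q = 2 * n' := ⟨q / 2, by omega⟩
        rw [mv_even]
        right
        rw [(lenAt_θF C X n).2]
        have hn' : n < n' := by omega
        have h5 : (2 * TT C X n' + 1) / 2 = TT C X n' := by omega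
        rw [h5]
        exact hs n' hn'
      · obtain ⟨n', rfl⟩ : ∃ n', q = 2 * n' + 1 := ⟨q / 2, by omega⟩
        rw [mv_odd]
        left
        omega
    rw [if_pos hs, if_pos hcond]
    congr 1
    omega
  · rw [if_neg hs, if_neg]
    rintro ⟨_, hall⟩
    push_neg at hs
    obtain ⟨n', hn'1, hn'2⟩ := hs
    have h5 := hall (2 * n') (2 * TT C X n' + 1) (by omega) (by rw [θF_strip_get?, mv_even])
    rw [(lenAt_θF C X n).2] at h5
    rcases h5 with h5 | h5
    · omega
    · have h6 : (2 * TT C X n' + 1) / 2 = TT C X n' := by omega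
      omega

theorem seq_none_mono {α : Type*} {s : Stream'.Seq α} {a b : ℕ} (h : s.get? a = none)
    (hab : a ≤ b) : s.get? b = none := by
  induction b with
  | zero =>
    obtain rfl : a = 0 := by omega
    exact h
  | succ b ih =>
    rcases Nat.lt_succ_iff_lt_or_eq.mp (Nat.lt_succ_of_le hab) with h1 | h1
    · exact s.2 (ih (by omega))
    · subst h1; exact h

/-- The main correctness theorem: the strategy realizes `G` through `Ufun`. -/
theorem strip_G_eq (hcl : ∀ σ m, IsClosed (C σ m))
    (hmono : ∀ σ m m', m ≤ m' → C σ m ⊆ C σ m')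
    (hun : ∀ σ (Z : HatBaire), (∃ m, Z ∈ C σ m) ↔ Z ∈ PfxSet G σ) (X : HatBaire) :
    strip (G X) = strip (Ufun (θF C X)) := by
  classical
  have hch : ∀ j, (∀ k, k ≤ j → ((strip (G X)).get? k).isSome) →
      ∃ nj, TT C X nj = j ∧ (∀ n', nj < n' → j < TT C X n') ∧
        (strip (G X)).get? j = some (dgt ((stk C X (nj + 1)).getD j 0)) :=
    fun j h => surv_exists C G hcl hmono hun X j h
  choose! νs hν using hch
  have hupair : ∀ n, (∀ n', n < n' → TT C X n < TT C X n') →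
      (∀ k, k ≤ TT C X n → ((strip (G X)).get? k).isSome) ∧ n = νs (TT C X n) := by
    intro n hs
    have hgood : ∀ k, k ≤ TT C X n → ((strip (G X)).get? k).isSome := by
      by_contra hb
      push_neg at hb
      obtain ⟨k1, hk1, hk1b⟩ := hb
      have hex : ∃ k, ¬ ((strip (G X)).get? k).isSome := ⟨k1, by simpa using hk1b⟩
      have h0 : ¬ ((strip (G X)).get? (Nat.find hex)).isSome := Nat.find_spec hex
      have hlt : ∀ k, k < Nat.find hex → ((strip (G X)).get? k).isSome := fun k hk =>
        not_not.mp (Nat.find_min hex hk)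
      have hk₀ : Nat.find hex ≤ TT C X n :=
        le_trans (Nat.find_min' hex (by simpa using hk1b)) hk1
      obtain ⟨n', hn'1, hn'2⟩ := divergence C G hcl hmono hun X hlt h0 (n + 1)
      have h9 := hs n' (by omega)
      omega
    refine ⟨hgood, ?_⟩
    obtain ⟨h1, h2, h3⟩ := hν (TT C X n) hgood
    rcases lt_trichotomy n (νs (TT C X n)) with h | h | h
    · have h9 := hs _ h; omega
    · exact h
    · have h9 := h2 n h; omega
  have hWsome : ∀ p, (Ufun (θF C X) p).isSome →
      ∃ j, (∀ k, k ≤ j → ((strip (G X)).get? k).isSome) ∧ p = 2 * νs j + 1 ∧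
        TT C X (νs j) = j := by
    intro p hp
    by_cases hq2 : p % 2 = 0
    · obtain ⟨m, rfl⟩ : ∃ m, p = 2 * m := ⟨p / 2, by omega⟩
      rw [W_even] at hp; simp at hp
    · obtain ⟨m, rfl⟩ : ∃ m, p = 2 * m + 1 := ⟨p / 2, by omega⟩
      rw [W_odd] at hp
      by_cases hs : ∀ n', m < n' → TT C X m < TT C X n'
      · obtain ⟨hgood, heq⟩ := hupair m hs
        refine ⟨TT C X m, hgood, by rw [← heq], ?_⟩
        rw [← heq]
      · rw [if_neg hs] at hp; simp at hp
  have hWval : ∀ j, (∀ k, k ≤ j → ((strip (G X)).get? k).isSome) →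
      Ufun (θF C X) (2 * νs j + 1) = some (dgt ((stk C X (νs j + 1)).getD j 0)) := by
    intro j hg
    obtain ⟨h1, h2, h3⟩ := hν j hg
    rw [W_odd, if_pos]
    · rw [h1]
    · intro n' hn'
      rw [h1]
      exact h2 n' hn'
  have hmonoν : ∀ j j', (∀ k, k ≤ j' → ((strip (G X)).get? k).isSome) → j < j' →
      νs j < νs j' := by
    intro j j' hg' hjj
    have hg : ∀ k, k ≤ j → ((strip (G X)).get? k).isSome := fun k hk => hg' k (by omega)
    obtain ⟨h1, h2, h3⟩ := hν j hg
    obtain ⟨h1', h2', h3'⟩ := hν j' hg'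
    rcases lt_trichotomy (νs j) (νs j') with h | h | h
    · exact h
    · exfalso; rw [h, h1'] at h1; omega
    · exfalso; have h9 := h2' (νs j) h; omega
  have hcnt : ∀ j, (∀ k, k ≤ j → ((strip (G X)).get? k).isSome) →
      cnt (Ufun (θF C X)) (2 * νs j + 1) = j := by
    intro j
    induction j with
    | zero =>
      intro hg
      apply cnt_eq_zero.mpr
      intro p hp hps
      obtain ⟨j', hg', hpe, _⟩ := hWsome p hps
      subst hpe
      have h9 : ¬ (2 * νs j' + 1 < 2 * νs 0 + 1) := by
        by_cases hj' : j' = 0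
        · subst hj'; omega
        · have := hmonoν 0 j' hg' (by omega); omega
      omega
    | succ j ihj =>
      intro hg
      have hgj : ∀ k, k ≤ j → ((strip (G X)).get? k).isSome := fun k hk => hg k (by omega)
      have hlt : νs j < νs (j + 1) := hmonoν j (j + 1) hg (by omega)
      have e1 : cnt (Ufun (θF C X)) (2 * νs (j + 1) + 1)
          = cnt (Ufun (θF C X)) (2 * νs j + 2) := by
        apply cnt_congr_of_none (by omega)
        intro p hp1 hp2 hps
        obtain ⟨j', hg', hpe, _⟩ := hWsome p hps
        subst hpe
        have h6 : j < j' := by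
          by_contra h7
          push_neg at h7
          rcases Nat.lt_or_ge j' j with h8 | h8
          · have := hmonoν j' j hgj h8; omega
          · obtain rfl : j' = j := by omega
            omega
        have h7 : j' < j + 1 := by
          by_contra h8
          push_neg at h8
          rcases Nat.lt_or_ge (j + 1) j' with h9 | h9
          · have := hmonoν (j + 1) j' hg' h9; omega
          · obtain rfl : j' = j + 1 := by omega
            omega
        omega
      have e2 : cnt (Ufun (θF C X)) (2 * νs j + 2)
          = cnt (Ufun (θF C X)) (2 * νs j + 1) + 1 := by
        have h9 := cnt_succ_of_isSome (X := Ufun (θF C X)) (i := 2 * νs j + 1)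
          (by rw [hWval j hgj]; rfl)
        rw [show 2 * νs j + 2 = (2 * νs j + 1) + 1 by omega]
        exact h9
      rw [e1, e2, ihj hgj]
  apply Stream'.Seq.ext
  intro k
  by_cases hchain : ∀ i, i ≤ k → ((strip (G X)).get? i).isSome
  · obtain ⟨h1, h2, h3⟩ := hν k hchain
    have hns : nthSome (Ufun (θF C X)) k = some (2 * νs k + 1) :=
      nthSome_eq_some_iff.mpr ⟨by rw [hWval k hchain]; rfl, hcnt k hchain⟩
    rw [h3, strip_get? (Ufun (θF C X)) k, hns, Option.bind_some, hWval k hchain]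
  · push_neg at hchain
    obtain ⟨k1, hk1, hk1b⟩ := hchain
    have hyk : (strip (G X)).get? k = none := by
      have h8 : (strip (G X)).get? k1 = none := by
        cases hh : (strip (G X)).get? k1 with
        | none => rfl
        | some v => rw [hh] at hk1b; simp at hk1b
      exact seq_none_mono h8 hk1
    have hrhs : (strip (Ufun (θF C X))).get? k = none := by
      rw [strip_get?_eq_none_iff]
      apply nthSome_eq_none_iff.mpr
      intro i
      rintro ⟨his, hic⟩
      obtain ⟨j', hg', hpe, _⟩ := hWsome i his
      subst hpe
      have h9 := hcnt j' hg'
      have hj'k : j' = k := by omega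
      subst hj'k
      exact hk1b (hg' k1 hk1)
    rw [hyk, hrhs]

end Strategy

end Statement10

/-- There is a conciliatory function `U : ω̂^ω → ω̂^ω` that is simultaneously
`Σ⁰₂`-universal and initializable. -/
theorem exists_sigma2_universal_initializable :
    ∃ U : HatBaire → HatBaire, ConciliatoryF U ∧ SigmaUniversal 2 U ∧ InitializableH U := by
  refine ⟨Ufun, Ufun_conciliatory, ⟨Ufun_measurable, ?_⟩, Ufun_initializable⟩
  intro G hGcon hGmeas
  obtain ⟨C, hcl, hmono, hun⟩ := exists_closed_approx hGmeas
  exact ⟨θF C, continuous_θF C, fun X => strip_G_eq C G hcl hmono hun X⟩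

end WadgeStudy
end
end

section
/- Let Q be a quasi-order, ξ a countable ordinal, and S, T terms. (1) If every function in Σ_T and every function in Σ_S is Δ⁰_{2+ξ}-measurable, then every function in Σ_{T→S} is Δ⁰_{2+ξ}-measurable. (2) If every function in Σ_T is Δ⁰_{1+ξ}-measurable, then every function in Σ_{⟨T⟩} is Δ⁰_{2+ξ}-measurable. (3) For any countable ordinal α, if every function in Σ_T is Δ⁰_{1+ξ}-measurable, then every function in Σ_{⟨T⟩^{ω^α}} is Δ⁰_{1+ω^α+ξ}-measurable. -/
/-!
Common definitions for formalizing "On the structure of the Wadge degrees of bqo-valued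
Borel functions" by Kihara and Montalbán.
-/

open scoped Classical
noncomputable section

namespace WadgeStudy

/-! ### Auxiliary lemmas for Statement 16 -/

section BorelRankAux

theorem mem_cylB {σ : List ℕ} {y : Baire} :
    y ∈ cylB σ ↔ ∀ (i : ℕ) (h : i < σ.length), y i = σ[i] := by
  constructor
  · intro h i hi
    simpa [List.get_eq_getElem] using h ⟨i, hi⟩
  · intro h i
    simpa [List.get_eq_getElem] using h i i.2

theorem mem_cylB_initSeg {x y : Baire} {n : ℕ} :
    y ∈ cylB (initSeg x n) ↔ ∀ i, i < n → y i = x i := by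
  simp only [initSeg, mem_cylB, List.length_ofFn, List.getElem_ofFn]

theorem self_mem_cylB_initSeg (x : Baire) (n : ℕ) : x ∈ cylB (initSeg x n) :=
  mem_cylB_initSeg.mpr fun _ _ => rfl

theorem isClopen_cylB (σ : List ℕ) : IsClopen (cylB σ) := by
  have h : cylB σ = ⋂ i : Fin σ.length, {y : Baire | y i = σ.get i} := by
    ext y; simp [cylB, Set.mem_iInter]
  rw [h]
  constructor
  · exact isClosed_iInter fun i =>
      IsClosed.preimage (continuous_apply (i : ℕ)) isClosed_singleton
  · refine isOpen_iInter_of_finite fun i => ?_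
    have hp : {y : Baire | y (i : ℕ) = σ.get i} =
        (fun y : Baire => y (i : ℕ)) ⁻¹' {σ.get i} := rfl
    rw [hp]
    exact IsOpen.preimage (continuous_apply (i : ℕ)) (isOpen_discrete _)

theorem cylB_nonempty (σ : List ℕ) : (cylB σ).Nonempty := by
  refine ⟨appendStr σ fun _ => 0, fun i => ?_⟩
  simp [appendStr, i.isLt]

theorem exists_cyl_subset {V : Set Baire} (hV : IsOpen V) {x : Baire} (hx : x ∈ V) :
    ∃ n, cylB (initSeg x n) ⊆ V := by
  rcases isOpen_pi_iff.mp hV x hx with ⟨I, u, hu, hsub⟩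
  refine ⟨(I.sup id) + 1, fun y hy => ?_⟩
  apply hsub
  intro a ha
  have hlt : a < I.sup id + 1 := Nat.lt_succ_of_le (Finset.le_sup (f := id) ha)
  rw [mem_cylB_initSeg.mp hy a hlt]
  exact (hu a ha).2

/-! #### Basic `SigmaZero` lemmas -/

theorem SigmaZero.one_le {X : Type*} [TopologicalSpace X] {α : Ordinal.{0}} {s : Set X}
    (h : SigmaZero X α s) : 1 ≤ α := by
  cases h with
  | of_isOpen _ => exact le_refl 1
  | iUnion hα _ _ _ _ => exact le_of_lt hα

theorem SigmaZero.preimage {X Y : Type*} [TopologicalSpace X] [TopologicalSpace Y]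
    {f : Y → X} (hf : Continuous f) {α : Ordinal.{0}} {s : Set X}
    (h : SigmaZero X α s) : SigmaZero Y α (f ⁻¹' s) := by
  induction h with
  | of_isOpen ho => exact SigmaZero.of_isOpen (ho.preimage hf)
  | iUnion hα g β hβ hg ih =>
      rw [Set.preimage_iUnion]
      exact SigmaZero.iUnion hα _ β hβ fun n => by
        rw [← Set.preimage_compl]; exact ih n

theorem sigmaZero_empty {X : Type*} [TopologicalSpace X] {α : Ordinal.{0}} (hα : 1 ≤ α) :
    SigmaZero X α ∅ := by
  rcases eq_or_lt_of_le hα with h | h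
  · exact h ▸ SigmaZero.of_isOpen isOpen_empty
  · have he : (∅ : Set X) = ⋃ _ : ℕ, (∅ : Set X) := by simp
    rw [he]
    exact SigmaZero.iUnion h _ (fun _ => 1) (fun _ => h) fun _ => by
      show SigmaZero X 1 (∅ : Set X)ᶜ
      rw [Set.compl_empty]
      exact SigmaZero.of_isOpen isOpen_univ

theorem sigmaZero_of_isClosed {X : Type*} [TopologicalSpace X] {α : Ordinal.{0}} (hα : 1 < α)
    {s : Set X} (hs : IsClosed s) : SigmaZero X α s := by
  have he : s = ⋃ _ : ℕ, s := (Set.iUnion_const s).symm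
  rw [he]
  exact SigmaZero.iUnion hα _ (fun _ => 1) (fun _ => hα) fun _ =>
    SigmaZero.of_isOpen hs.isOpen_compl

/-- A fixed enumeration of all finite strings. -/
def lEnum : ℕ → List ℕ := Denumerable.ofNat (List ℕ)

theorem lEnum_surj (σ : List ℕ) : ∃ n, lEnum n = σ :=
  ⟨Encodable.encode σ, Denumerable.ofNat_encode σ⟩

theorem open_eq_iUnion_cyl {V : Set Baire} (hV : IsOpen V) :
    V = ⋃ n, (if cylB (lEnum n) ⊆ V then cylB (lEnum n) else ∅) := by
  ext x
  simp only [Set.mem_iUnion]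
  constructor
  · intro hx
    obtain ⟨m, hm⟩ := exists_cyl_subset hV hx
    obtain ⟨n, hn⟩ := lEnum_surj (initSeg x m)
    refine ⟨n, ?_⟩
    rw [hn, if_pos hm]
    exact self_mem_cylB_initSeg x m
  · rintro ⟨n, hn⟩
    by_cases hc : cylB (lEnum n) ⊆ V
    · rw [if_pos hc] at hn; exact hc hn
    · rw [if_neg hc] at hn; exact absurd hn (Set.notMem_empty x)

theorem sigmaZero_of_isOpen_Baire {α : Ordinal.{0}} (hα : 1 < α) {s : Set Baire}
    (hs : IsOpen s) : SigmaZero Baire α s := by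
  rw [open_eq_iUnion_cyl hs]
  refine SigmaZero.iUnion hα _ (fun _ => 1) (fun _ => hα) fun n => ?_
  by_cases hc : cylB (lEnum n) ⊆ s
  · rw [if_pos hc]
    exact SigmaZero.of_isOpen (isClopen_cylB _).compl.isOpen
  · rw [if_neg hc]
    simpa using SigmaZero.of_isOpen (isOpen_univ (X := Baire))

theorem SigmaZero.mono {α β : Ordinal.{0}} {s : Set Baire} (h : SigmaZero Baire α s)
    (hβ : 1 < β) (hle : α ≤ β) : SigmaZero Baire β s := by
  cases h with
  | of_isOpen ho => exact sigmaZero_of_isOpen_Baire hβ ho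
  | iUnion hα f γ hγ hf =>
      exact SigmaZero.iUnion hβ f γ (fun n => lt_of_lt_of_le (hγ n) hle) hf

theorem sigmaZero_inv {X : Type*} [TopologicalSpace X] {α : Ordinal.{0}} (hα : 1 < α)
    {s : Set X} (h : SigmaZero X α s) :
    ∃ (f : ℕ → Set X) (β : ℕ → Ordinal.{0}), (∀ n, β n < α) ∧
      (∀ n, SigmaZero X (β n) (f n)ᶜ) ∧ s = ⋃ n, f n := by
  cases h with
  | of_isOpen ho => exact absurd hα (lt_irrefl 1)
  | iUnion hα' f β hβ hf => exact ⟨f, β, hβ, hf, rfl⟩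

theorem sigmaZero_union {α β : Ordinal.{0}} {s t : Set Baire}
    (hs : SigmaZero Baire α s) (ht : SigmaZero Baire β t) :
    SigmaZero Baire (max α β) (s ∪ t) := by
  rcases lt_or_ge 1 (max α β) with hm | hm
  · obtain ⟨f, γ, hγ, hf, rfl⟩ := sigmaZero_inv hm (hs.mono hm (le_max_left _ _))
    obtain ⟨g, δ, hδ, hg, rfl⟩ := sigmaZero_inv hm (ht.mono hm (le_max_right _ _))
    have he : (⋃ n, f n) ∪ (⋃ n, g n) =
        ⋃ n, (if Even n then f (n / 2) else g (n / 2)) := by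
      ext x
      simp only [Set.mem_union, Set.mem_iUnion]
      constructor
      · rintro (⟨k, hk⟩ | ⟨k, hk⟩)
        · refine ⟨2 * k, ?_⟩
          rw [if_pos (even_two_mul k)]
          have h2 : 2 * k / 2 = k := by omega
          rw [h2]; exact hk
        · refine ⟨2 * k + 1, ?_⟩
          have hodd : ¬ Even (2 * k + 1) := by simp [Nat.even_add_one]
          rw [if_neg hodd]
          have h2 : (2 * k + 1) / 2 = k := by omega
          rw [h2]; exact hk
      · rintro ⟨n, hn⟩
        by_cases hpar : Even n
        · rw [if_pos hpar] at hn; exact Or.inl ⟨n / 2, hn⟩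
        · rw [if_neg hpar] at hn; exact Or.inr ⟨n / 2, hn⟩
    rw [he]
    refine SigmaZero.iUnion hm _ (fun n => if Even n then γ (n / 2) else δ (n / 2))
      (fun n => ?_) (fun n => ?_)
    · by_cases hpar : Even n
      · simp only [if_pos hpar]; exact hγ _
      · simp only [if_neg hpar]; exact hδ _
    · by_cases hpar : Even n
      · simp only [if_pos hpar]; exact hf _
      · simp only [if_neg hpar]; exact hg _
  · have h1 : max α β = 1 := le_antisymm hm (le_trans hs.one_le (le_max_left _ _))
    rw [h1]
    have hso : IsOpen s := by
      cases hs with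
      | of_isOpen h => exact h
      | iUnion hα' _ _ _ _ =>
          exact absurd (lt_of_lt_of_le (lt_of_lt_of_le hα' (le_max_left α β)) hm)
            (lt_irrefl 1)
    have hto : IsOpen t := by
      cases ht with
      | of_isOpen h => exact h
      | iUnion hβ' _ _ _ _ =>
          exact absurd (lt_of_lt_of_le (lt_of_lt_of_le hβ' (le_max_right α β)) hm)
            (lt_irrefl 1)
    exact SigmaZero.of_isOpen (hso.union hto)

theorem sigmaZero_union_same {α : Ordinal.{0}} {s t : Set Baire}
    (hs : SigmaZero Baire α s) (ht : SigmaZero Baire α t) :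
    SigmaZero Baire α (s ∪ t) := by
  have h := sigmaZero_union hs ht
  rwa [max_self] at h

theorem sigmaZero_iUnion {X : Type*} [TopologicalSpace X] {α : Ordinal.{0}} (hα : 1 < α)
    {s : ℕ → Set X} (hs : ∀ n, SigmaZero X α (s n)) : SigmaZero X α (⋃ n, s n) := by
  choose f γ hγ hf hseq using fun n => sigmaZero_inv hα (hs n)
  have he : (⋃ n, s n) = ⋃ k, f (Nat.unpair k).1 (Nat.unpair k).2 := by
    ext x
    simp only [Set.mem_iUnion]
    constructor
    · rintro ⟨n, hn⟩
      rw [hseq n] at hn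
      obtain ⟨m, hm⟩ := Set.mem_iUnion.mp hn
      exact ⟨Nat.pair n m, by simpa [Nat.unpair_pair] using hm⟩
    · rintro ⟨k, hk⟩
      refine ⟨(Nat.unpair k).1, ?_⟩
      rw [hseq]
      exact Set.mem_iUnion.mpr ⟨_, hk⟩
  rw [he]
  exact SigmaZero.iUnion hα _ (fun k => γ (Nat.unpair k).1 (Nat.unpair k).2)
    (fun k => hγ _ _) (fun k => hf _ _)

theorem sigmaZero_inter {α : Ordinal.{0}} (hα : 1 < α) {s t : Set Baire}
    (hs : SigmaZero Baire α s) (ht : SigmaZero Baire α t) :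
    SigmaZero Baire α (s ∩ t) := by
  obtain ⟨f, γ, hγ, hf, rfl⟩ := sigmaZero_inv hα hs
  obtain ⟨g, δ, hδ, hg, rfl⟩ := sigmaZero_inv hα ht
  have he : (⋃ n, f n) ∩ (⋃ n, g n) =
      ⋃ k, (f (Nat.unpair k).1 ∩ g (Nat.unpair k).2) := by
    ext x
    simp only [Set.mem_inter_iff, Set.mem_iUnion]
    constructor
    · rintro ⟨⟨n, hn⟩, ⟨m, hm⟩⟩
      exact ⟨Nat.pair n m, by simp [Nat.unpair_pair, hn, hm]⟩
    · rintro ⟨k, hk1, hk2⟩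
      exact ⟨⟨_, hk1⟩, ⟨_, hk2⟩⟩
  rw [he]
  refine SigmaZero.iUnion hα _ (fun k => max (γ (Nat.unpair k).1) (δ (Nat.unpair k).2))
    (fun k => max_lt (hγ _) (hδ _)) (fun k => ?_)
  rw [Set.compl_inter]
  exact sigmaZero_union (hf _) (hg _)

theorem deltaMeasurable_of_fibers {Q : Type*} {α : Ordinal.{0}} (hα : 1 < α) {A : Baire → Q}
    (hr : (Set.range A).Countable) (hfib : ∀ q, SigmaZero Baire α (A ⁻¹' {q})) :
    DeltaMeasurable α A := by
  refine ⟨hr, fun q => ⟨hfib q, ?_⟩⟩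
  show SigmaZero Baire α (A ⁻¹' {q})ᶜ
  rcases Set.eq_empty_or_nonempty (Set.range A \ {q}) with he | hne
  · have hc : (A ⁻¹' {q})ᶜ = ∅ := by
      ext x
      simp only [Set.mem_compl_iff, Set.mem_preimage, Set.mem_singleton_iff,
        Set.mem_empty_iff_false, iff_false, not_not]
      by_contra hx
      have : A x ∈ Set.range A \ {q} := ⟨Set.mem_range_self x, hx⟩
      rw [he] at this
      exact this
    rw [hc]
    exact sigmaZero_empty (le_of_lt hα)
  · obtain ⟨g, hg⟩ := Set.Countable.exists_eq_range (hr.mono Set.diff_subset) hne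
    have hc : (A ⁻¹' {q})ᶜ = ⋃ n, A ⁻¹' {g n} := by
      ext x
      simp only [Set.mem_compl_iff, Set.mem_preimage, Set.mem_singleton_iff, Set.mem_iUnion]
      constructor
      · intro hx
        have hm : A x ∈ Set.range g := by
          rw [← hg]; exact ⟨Set.mem_range_self x, hx⟩
        obtain ⟨n, hn⟩ := hm
        exact ⟨n, hn.symm⟩
      · rintro ⟨n, hn⟩
        have hm : g n ∈ Set.range A \ {q} := by
          rw [hg]; exact Set.mem_range_self n
        rw [hn]; exact hm.2
    rw [hc]
    exact sigmaZero_iUnion hα fun n => hfib (g n)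

/-! #### Retractions onto nonempty closed subsets of Baire space -/

/-- `σ` is extendible to an element of `C`. -/
def extb (C : Set Baire) (σ : List ℕ) : Prop := ∃ y ∈ C, y ∈ cylB σ

theorem extb_append {C : Set Baire} {σ : List ℕ} (h : extb C σ) :
    ∃ k, extb C (σ ++ [k]) := by
  obtain ⟨y, hyC, hyσ⟩ := h
  refine ⟨y σ.length, y, hyC, ?_⟩
  rw [mem_cylB] at hyσ ⊢
  intro i hi
  simp only [List.length_append, List.length_singleton] at hi
  rcases lt_or_eq_of_le (Nat.lt_succ_iff.mp hi) with h' | h'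
  · rw [List.getElem_append_left h']
    exact hyσ i h'
  · subst h'
    simp [List.getElem_concat_length]

/-- The next digit of the canonical retraction. -/
noncomputable def retDig (C : Set Baire) (σ : List ℕ) (m : ℕ) : ℕ :=
  if extb C (σ ++ [m]) then m
  else if h : ∃ k, extb C (σ ++ [k]) then Nat.find h else 0

/-- The finite approximations of the canonical retraction. -/
noncomputable def retStr (C : Set Baire) (x : Baire) : ℕ → List ℕ
  | 0 => []
  | n + 1 => retStr C x n ++ [retDig C (retStr C x n) (x n)]

/-- The canonical retraction of Baire space onto a nonempty closed subset `C`. -/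
noncomputable def retr (C : Set Baire) (x : Baire) : Baire :=
  fun n => retDig C (retStr C x n) (x n)

theorem retDig_extb {C : Set Baire} {σ : List ℕ} (h : extb C σ) (m : ℕ) :
    extb C (σ ++ [retDig C σ m]) := by
  unfold retDig
  by_cases h1 : extb C (σ ++ [m])
  · rw [if_pos h1]; exact h1
  · rw [if_neg h1]
    rcases extb_append h with ⟨k, hk⟩
    rw [dif_pos ⟨k, hk⟩]
    exact Nat.find_spec (⟨k, hk⟩ : ∃ k, extb C (σ ++ [k]))

theorem retStr_extb {C : Set Baire} (hC : C.Nonempty) (x : Baire) :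
    ∀ n, extb C (retStr C x n)
  | 0 => by
      obtain ⟨y, hy⟩ := hC
      exact ⟨y, hy, fun i => i.elim0⟩
  | n + 1 => retDig_extb (retStr_extb hC x n) _

theorem retStr_eq_ofFn (C : Set Baire) (x : Baire) (n : ℕ) :
    retStr C x n = List.ofFn (fun i : Fin n => retr C x i) := by
  induction n with
  | zero => rfl
  | succ n ih =>
    rw [List.ofFn_succ', List.concat_eq_append]
    show retStr C x n ++ [retDig C (retStr C x n) (x n)] =
      List.ofFn (fun i : Fin n => retr C x (i.castSucc : Fin (n + 1))) ++
        [retDig C (retStr C x n) (x n)]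
    rw [ih]
    congr 1

theorem retr_mem {C : Set Baire} (hC : IsClosed C) (hne : C.Nonempty) (x : Baire) :
    retr C x ∈ C := by
  by_contra hz
  obtain ⟨n, hn⟩ := exists_cyl_subset hC.isOpen_compl hz
  obtain ⟨y, hyC, hy⟩ := retStr_extb hne x n
  rw [retStr_eq_ofFn] at hy
  exact (hn hy) hyC

theorem extb_initSeg_snoc {C : Set Baire} {x : Baire} (hx : x ∈ C) (n : ℕ) :
    extb C (initSeg x n ++ [x n]) := by
  refine ⟨x, hx, ?_⟩
  have he : initSeg x n ++ [x n] = initSeg x (n + 1) := by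
    rw [initSeg, initSeg, List.ofFn_succ', List.concat_eq_append]
    congr 1
  rw [he]
  exact self_mem_cylB_initSeg x (n + 1)

theorem retStr_of_mem {C : Set Baire} {x : Baire} (hx : x ∈ C) (n : ℕ) :
    retStr C x n = initSeg x n := by
  induction n with
  | zero => rfl
  | succ n ih =>
    show retStr C x n ++ [retDig C (retStr C x n) (x n)] = _
    rw [ih]
    have hd : retDig C (initSeg x n) (x n) = x n := by
      unfold retDig
      rw [if_pos (extb_initSeg_snoc hx n)]
    rw [hd]
    rw [initSeg, initSeg, List.ofFn_succ', List.concat_eq_append]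
    congr 1

theorem retr_of_mem {C : Set Baire} {x : Baire} (hx : x ∈ C) : retr C x = x := by
  funext n
  show retDig C (retStr C x n) (x n) = x n
  rw [retStr_of_mem hx]
  unfold retDig
  rw [if_pos (extb_initSeg_snoc hx n)]

theorem retStr_congr {C : Set Baire} {x y : Baire} :
    ∀ n, (∀ i, i < n → x i = y i) → retStr C x n = retStr C y n
  | 0, _ => rfl
  | n + 1, h => by
    show retStr C x n ++ _ = retStr C y n ++ _
    rw [retStr_congr n (fun i hi => h i (Nat.lt_succ_of_lt hi)), h n (Nat.lt_succ_self n)]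

theorem continuous_of_determined_s16 {φ : Baire → ℕ} (n : ℕ)
    (h : ∀ x y : Baire, (∀ i, i < n → x i = y i) → φ x = φ y) : Continuous φ := by
  have he : φ = (fun v : Fin n → ℕ => φ (fun i => if hi : i < n then v ⟨i, hi⟩ else 0)) ∘
      (fun x : Baire => fun i : Fin n => x i) := by
    funext x
    exact h x _ (fun i hi => by simp [hi])
  rw [he]
  exact Continuous.comp continuous_of_discreteTopology
    (continuous_pi fun i => continuous_apply (i : ℕ))

theorem continuous_retr (C : Set Baire) : Continuous (retr C) := by
  apply continuous_pi
  intro n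
  apply continuous_of_determined_s16 (n + 1)
  intro x y h
  show retDig C (retStr C x n) (x n) = retDig C (retStr C y n) (y n)
  rw [retStr_congr n (fun i hi => h i (Nat.lt_succ_of_lt hi)), h n (Nat.lt_succ_self n)]

/-! #### Precomposition of `SigmaT` with continuous maps -/

theorem SigmaT.precomp {Q : Type u} {T : Term Q} {D : Set Baire} {A : Baire → Q}
    (h : SigmaT T D A) {f : Baire → Baire} (hf : Continuous f) :
    SigmaT T (f ⁻¹' D) (fun x => A (f x)) := by
  induction h with
  | const q D' A' hc => exact SigmaT.const q _ _ fun x hx => hc (f x) hx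
  | sup S D' A' C hcl hpart hS ih =>
      refine SigmaT.sup S _ _ (fun i => f ⁻¹' C i) (fun i => ?_)
        (fun x hx => hpart (f x) hx) (fun i => ?_)
      · have hg : Continuous (fun x : ↥(f ⁻¹' D') => (⟨f x.1, x.2⟩ : ↥D')) :=
          by
          have hc1 : Continuous (fun x : ↥(f ⁻¹' D') => f x.1) := by
            exact hf.comp continuous_subtype_val
          exact hc1.subtype_mk fun x => x.2
        have he : ((fun x : ↥(f ⁻¹' D') => x.1) ⁻¹' (f ⁻¹' C i)) =
            ((fun x : ↥(f ⁻¹' D') => (⟨f x.1, x.2⟩ : ↥D')) ⁻¹'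
              ((fun x : ↥D' => x.1) ⁻¹' C i)) := rfl
        rw [he]
        exact (hcl i).preimage hg
      · have hi := ih i
        rwa [Set.preimage_inter] at hi
  | node B F D' A' V hV h1 h2 ih1 ih2 =>
      refine SigmaT.node B F _ _ (f ⁻¹' V) ?_ ?_ ?_
      · have hg : Continuous (fun x : ↥(f ⁻¹' D') => (⟨f x.1, x.2⟩ : ↥D')) :=
          by
          have hc1 : Continuous (fun x : ↥(f ⁻¹' D') => f x.1) := by
            exact hf.comp continuous_subtype_val
          exact hc1.subtype_mk fun x => x.2
        have he : ((fun x : ↥(f ⁻¹' D') => x.1) ⁻¹' (f ⁻¹' V)) =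
            ((fun x : ↥(f ⁻¹' D') => (⟨f x.1, x.2⟩ : ↥D')) ⁻¹'
              ((fun x : ↥D' => x.1) ⁻¹' V)) := rfl
        rw [he]
        exact hV.preimage hg
      · have hi := ih1
        rwa [Set.preimage_diff] at hi
      · have hi := ih2
        rwa [Set.preimage_inter] at hi
  | jump α T' D' A' D'' B hD hB hA ihB =>
      refine SigmaT.jump α T' _ _ (fun x => D'' (f x)) B (fun σ => ?_) hB
        (fun x hx => hA (f x) hx)
      have hg : Continuous (fun x : ↥(f ⁻¹' D') => (⟨f x.1, x.2⟩ : ↥D')) :=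
        by
          have hc1 : Continuous (fun x : ↥(f ⁻¹' D') => f x.1) := by
            exact hf.comp continuous_subtype_val
          exact hc1.subtype_mk fun x => x.2
      have he : ((fun x : ↥(f ⁻¹' D') => D'' (f x.1)) ⁻¹' cylB σ) =
          ((fun x : ↥(f ⁻¹' D') => (⟨f x.1, x.2⟩ : ↥D')) ⁻¹'
            ((fun x : ↥D' => D'' x.1) ⁻¹' cylB σ)) := rfl
      rw [he]
      exact (hD σ).preimage hg

/-! #### Composition with `Σ⁰_η`-measurable maps -/

theorem sigmaZero_comp {η : Ordinal.{0}} (hη : 1 < η) {D' : Baire → Baire}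
    (hD : ∀ σ : List ℕ, SigmaZero Baire η (D' ⁻¹' cylB σ))
    {b : Ordinal.{0}} {s : Set Baire} (h : SigmaZero Baire b s) :
    SigmaZero Baire (η + (b - 1)) (D' ⁻¹' s) := by
  induction h with
  | of_isOpen ho =>
      rename_i t
      have h0 : ((1 : Ordinal.{0}) - 1) = 0 := by simp
      rw [h0, add_zero]
      rw [open_eq_iUnion_cyl ho, Set.preimage_iUnion]
      refine sigmaZero_iUnion hη fun n => ?_
      by_cases hc : cylB (lEnum n) ⊆ t
      · simp only [if_pos hc]
        exact hD _
      · simp only [if_neg hc, Set.preimage_empty]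
        exact sigmaZero_empty (X := Baire) (le_of_lt hη)
  | iUnion hb g β hβ hg ih =>
      rename_i b'
      rw [Set.preimage_iUnion]
      refine SigmaZero.iUnion (lt_of_lt_of_le hη le_self_add) _
        (fun n => η + (β n - 1)) (fun n => ?_) (fun n => ?_)
      · show η + (β n - 1) < η + (b' - 1)
        rw [add_lt_add_iff_left]
        have e1 : 1 + (β n - 1) = β n := Ordinal.add_sub_cancel_of_le (hg n).one_le
        have e2 : 1 + (b' - 1) = b' := Ordinal.add_sub_cancel_of_le (le_of_lt hb)
        exact (add_lt_add_iff_left (1 : Ordinal.{0})).mp (by rw [e1, e2]; exact hβ n)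
      · show SigmaZero Baire (η + (β n - 1)) (D' ⁻¹' g n)ᶜ
        rw [← Set.preimage_compl]
        exact ih n

/-! #### The jump case -/

theorem jump_case {Q : Type u} (ξ : Ordinal.{0}) (α : Ordinal.{0}) (T : Term Q)
    (hT : ∀ A : Baire → Q, MemSigmaT T A → DeltaMeasurable (1 + ξ) A)
    (A : Baire → Q) (hA : MemSigmaT (Term.jump α T) A) :
    DeltaMeasurable (1 + Ordinal.omega0 ^ α + ξ) A := by
  have hη : (1 : Ordinal.{0}) < 1 + Ordinal.omega0 ^ α := by
    have hp : (0 : Ordinal.{0}) < Ordinal.omega0 ^ α :=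
      Ordinal.opow_pos α Ordinal.omega0_pos
    simpa using (add_lt_add_iff_left (1 : Ordinal.{0})).mpr hp
  cases hA with
  | jump _ _ _ _ D' B hD hB hAB =>
    have hD' : ∀ σ : List ℕ, SigmaZero Baire (1 + Ordinal.omega0 ^ α) (D' ⁻¹' cylB σ) := by
      intro σ
      have hcont : Continuous (fun x : Baire => (⟨x, trivial⟩ : ↥(Set.univ : Set Baire))) :=
        Continuous.subtype_mk continuous_id fun _ => trivial
      exact (hD σ).preimage hcont
    have hBdm := hT B hB
    refine deltaMeasurable_of_fibers (lt_of_lt_of_le hη le_self_add) ?_ ?_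
    · refine Set.Countable.mono ?_ hBdm.1
      rintro _ ⟨x, rfl⟩
      rw [hAB x trivial]
      exact Set.mem_range_self _
    · intro q
      have hfib : A ⁻¹' {q} = D' ⁻¹' (B ⁻¹' {q}) := by
        ext x
        simp [hAB x trivial]
      have hs := sigmaZero_comp hη hD' (hBdm.2 q).1
      rw [Ordinal.add_sub_cancel] at hs
      rw [hfib]
      exact hs

/-! #### The node case -/

theorem node_case {Q : Type u} (ξ : Ordinal.{0}) (T : Term Q) (F : ℕ → Term Q)
    (hT : ∀ A : Baire → Q, MemSigmaT T A → DeltaMeasurable (2 + ξ) A)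
    (hF : ∀ A : Baire → Q, MemSigmaT (Term.sup F) A → DeltaMeasurable (2 + ξ) A)
    (A : Baire → Q) (hA : MemSigmaT (Term.node T F) A) :
    DeltaMeasurable (2 + ξ) A := by
  have h12 : (1 : Ordinal.{0}) < 2 := by
    have h' : (1 : Ordinal.{0}) < 1 + 1 := by
      simpa using (add_lt_add_iff_left (1 : Ordinal.{0})).mpr
        (zero_lt_one (α := Ordinal.{0}))
    rwa [one_add_one_eq_two] at h'
  have h2 : (1 : Ordinal.{0}) < 2 + ξ := lt_of_lt_of_le h12 le_self_add
  cases hA with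
  | node _ _ _ _ V hV h1 hV2 =>
    rw [Set.univ_inter] at hV2
    rw [← Set.compl_eq_univ_diff] at h1
    have hVopen : IsOpen V := by
      have he : V = (fun x : Baire => (⟨x, trivial⟩ : ↥(Set.univ : Set Baire))) ⁻¹'
          ((fun x : ↥(Set.univ : Set Baire) => x.1) ⁻¹' V) := rfl
      rw [he]
      exact hV.preimage (Continuous.subtype_mk continuous_id fun _ => trivial)
    have hVc : IsClosed Vᶜ := hVopen.isClosed_compl
    have hT' : Vᶜ.Nonempty → DeltaMeasurable (2 + ξ) (fun x => A (retr Vᶜ x)) := by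
      intro hne
      apply hT
      have hpre := h1.precomp (continuous_retr Vᶜ)
      have heq : (retr Vᶜ) ⁻¹' Vᶜ = Set.univ :=
        Set.eq_univ_of_forall fun x => retr_mem hVc hne x
      rwa [heq] at hpre
    have hFn : ∀ n, cylB (lEnum n) ⊆ V →
        DeltaMeasurable (2 + ξ) (fun x => A (retr (cylB (lEnum n)) x)) := by
      intro n hsub
      apply hF
      have hpre := hV2.precomp (continuous_retr (cylB (lEnum n)))
      have heq : (retr (cylB (lEnum n))) ⁻¹' V = Set.univ :=
        Set.eq_univ_of_forall fun x =>
          hsub (retr_mem (isClopen_cylB _).isClosed (cylB_nonempty _) x)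
      rwa [heq] at hpre
    have hfib : ∀ q : Q, A ⁻¹' {q} =
        ((fun x => A (retr Vᶜ x)) ⁻¹' {q} ∩ Vᶜ) ∪
          ⋃ n, (if cylB (lEnum n) ⊆ V then
            (fun x => A (retr (cylB (lEnum n)) x)) ⁻¹' {q} ∩ cylB (lEnum n) else ∅) := by
      intro q
      apply Set.Subset.antisymm
      · intro x hx
        by_cases hxV : x ∈ V
        · apply Set.mem_union_right
          obtain ⟨m, hm⟩ := exists_cyl_subset hVopen hxV
          obtain ⟨n, hn⟩ := lEnum_surj (initSeg x m)
          refine Set.mem_iUnion.mpr ⟨n, ?_⟩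
          rw [hn, if_pos hm]
          have hxc := self_mem_cylB_initSeg x m
          have hxq : A x = q := hx
          refine ⟨?_, hxc⟩
          have hrq : A (retr (cylB (initSeg x m)) x) = q := by
            rw [retr_of_mem hxc]; exact hxq
          exact hrq
        · apply Set.mem_union_left
          have hxq : A x = q := hx
          refine ⟨?_, hxV⟩
          have hrq : A (retr Vᶜ x) = q := by
            rw [retr_of_mem hxV]; exact hxq
          exact hrq
      · intro x hx
        rcases hx with hx | hx
        · obtain ⟨hx1, hx2⟩ := hx
          have hq : A (retr Vᶜ x) = q := hx1
          rw [retr_of_mem hx2] at hq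
          exact hq
        · obtain ⟨n, hn⟩ := Set.mem_iUnion.mp hx
          by_cases hs : cylB (lEnum n) ⊆ V
          · rw [if_pos hs] at hn
            obtain ⟨hn1, hn2⟩ := hn
            have hq : A (retr (cylB (lEnum n)) x) = q := hn1
            rw [retr_of_mem hn2] at hq
            exact hq
          · rw [if_neg hs] at hn
            exact absurd hn (Set.notMem_empty x)
    refine deltaMeasurable_of_fibers h2 ?_ ?_
    · have hsub : Set.range A ⊆
          (if Vᶜ.Nonempty then Set.range (fun x => A (retr Vᶜ x)) else ∅) ∪
            ⋃ n, (if cylB (lEnum n) ⊆ V then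
              Set.range (fun x => A (retr (cylB (lEnum n)) x)) else ∅) := by
        rintro _ ⟨x, rfl⟩
        by_cases hxV : x ∈ V
        · apply Set.mem_union_right
          obtain ⟨m, hm⟩ := exists_cyl_subset hVopen hxV
          obtain ⟨n, hn⟩ := lEnum_surj (initSeg x m)
          refine Set.mem_iUnion.mpr ⟨n, ?_⟩
          rw [hn, if_pos hm]
          have hxc := self_mem_cylB_initSeg x m
          exact ⟨x, by
            show A (retr (cylB (initSeg x m)) x) = A x
            rw [retr_of_mem hxc]⟩
        · apply Set.mem_union_left
          rw [if_pos ⟨x, hxV⟩]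
          exact ⟨x, by
            show A (retr Vᶜ x) = A x
            rw [retr_of_mem hxV]⟩
      refine Set.Countable.mono hsub
        (Set.Countable.union ?_ (Set.countable_iUnion fun n => ?_))
      · by_cases hne : Vᶜ.Nonempty
        · rw [if_pos hne]
          exact (hT' hne).1
        · rw [if_neg hne]
          exact Set.countable_empty
      · by_cases hs : cylB (lEnum n) ⊆ V
        · rw [if_pos hs]
          exact (hFn n hs).1
        · rw [if_neg hs]
          exact Set.countable_empty
    · intro q
      rw [hfib q]
      apply sigmaZero_union_same
      · by_cases hne : Vᶜ.Nonempty
        · exact sigmaZero_inter h2 ((hT' hne).2 q).1 (sigmaZero_of_isClosed h2 hVc)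
        · have he : Vᶜ = ∅ := Set.not_nonempty_iff_eq_empty.mp hne
          rw [he, Set.inter_empty]
          exact sigmaZero_empty (le_of_lt h2)
      · refine sigmaZero_iUnion h2 fun n => ?_
        by_cases hs : cylB (lEnum n) ⊆ V
        · rw [if_pos hs]
          exact sigmaZero_inter h2 ((hFn n hs).2 q).1
            (sigmaZero_of_isClosed h2 (isClopen_cylB _).isClosed)
        · rw [if_neg hs]
          exact sigmaZero_empty (le_of_lt h2)

end BorelRankAux

/-- Let `Q` be a quasi-order and `ξ` a countable ordinal.
(1) If every function in `Σ_T` and every function in `Σ_S` (where `S = ⊔_i F_i`) is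
`Δ⁰_{2+ξ}`-measurable, then so is every function in `Σ_{T→S}`.
(2) If every function in `Σ_T` is `Δ⁰_{1+ξ}`-measurable, then every function in `Σ_{⟨T⟩}` is
`Δ⁰_{2+ξ}`-measurable.
(3) For any countable ordinal `α`: if every function in `Σ_T` is `Δ⁰_{1+ξ}`-measurable, then
every function in `Σ_{⟨T⟩^{ω^α}}` is `Δ⁰_{1+ω^α+ξ}`-measurable. -/
theorem borel_rank_calculation (Q : Type u) [Preorder Q] (ξ : Ordinal.{0})
    (hξ : IsCountableOrd ξ) :
    (∀ (T : Term Q) (F : ℕ → Term Q),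
      (∀ A : Baire → Q, MemSigmaT T A → DeltaMeasurable (2 + ξ) A) →
      (∀ A : Baire → Q, MemSigmaT (Term.sup F) A → DeltaMeasurable (2 + ξ) A) →
      (∀ A : Baire → Q, MemSigmaT (Term.node T F) A → DeltaMeasurable (2 + ξ) A)) ∧
    (∀ T : Term Q,
      (∀ A : Baire → Q, MemSigmaT T A → DeltaMeasurable (1 + ξ) A) →
      (∀ A : Baire → Q, MemSigmaT (Term.jump 0 T) A → DeltaMeasurable (2 + ξ) A)) ∧
    (∀ α : Ordinal.{0}, IsCountableOrd α → ∀ T : Term Q,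
      (∀ A : Baire → Q, MemSigmaT T A → DeltaMeasurable (1 + ξ) A) →
      (∀ A : Baire → Q, MemSigmaT (Term.jump α T) A →
        DeltaMeasurable (1 + Ordinal.omega0 ^ α + ξ) A)) := by
  refine ⟨?_, ?_, ?_⟩
  · intro T F hT hF A hA
    exact node_case ξ T F hT hF A hA
  · intro T hT A hA
    have h := jump_case ξ 0 T hT A hA
    rwa [Ordinal.opow_zero, one_add_one_eq_two] at h
  · intro α _ T hT A hA
    exact jump_case ξ α T hT A hA


end WadgeStudy
end
end
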